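/- arXiv:1412.0397 — 4 statements merged into one kernel-verified Lean document; each statement's English description precedes it below -/
import Mathlib

section
/- Semiconjugacy is an equivalence relation on R_G, the set of homomorphisms from a group G into the group of orientation-preserving homeomorphisms of the circle. -/
noncomputable section

/-- The circle `ℝ/ℤ`. -/
abbrev S1 := AddCircle (1 : ℝ)

instance : Group (S1 ≃ₜ S1) where
  mul f g := g.trans f
  one := Homeomorph.refl _
  inv := Homeomorph.symm
  mul_assoc _ _ _ := rfl
  one_mul f := Homeomorph.ext fun _ => rfl
  mul_one f := Homeomorph.ext fun _ => rfl
  inv_mul_cancel f := Homeomorph.ext fun x => f.symm_apply_apply x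

/-- `f` is an orientation preserving homeomorphism of the circle: it admits a strictly
monotone lift to `ℝ` commuting with the translation by one. -/
def IsOP (f : S1 ≃ₜ S1) : Prop :=
  ∃ F : ℝ → ℝ, StrictMono F ∧ (∀ x, F (x + 1) = F x + 1) ∧
    ∀ x : ℝ, ((F x : S1)) = f (x : S1)

/-- `R_G`: homomorphisms from `G` to `Homeo₊(S¹)`. -/
structure RGp (G : Type) [Group G] where
  toFun : G →* (S1 ≃ₜ S1)
  op : ∀ g, IsOP (toFun g)

/-- A degree one monotone (not necessarily continuous) self map of the circle. -/
def DegOneMonotone (h : S1 → S1) : Prop :=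
  ∃ H : ℝ → ℝ, Monotone H ∧ (∀ x, H (x + 1) = H x + 1) ∧
    ∀ x : ℝ, ((H x : S1)) = h (x : S1)

/-- Membership in `R_G*`: the action has a global fixed point. -/
def HasGlobalFix {G : Type} [Group G] (φ : RGp G) : Prop := ∃ x : S1, ∀ g, φ.toFun g x = x

/-- Semiconjugacy of two circle actions. -/
def Semiconj {G : Type} [Group G] (φ₁ φ₂ : RGp G) : Prop :=
  (HasGlobalFix φ₁ ∧ HasGlobalFix φ₂) ∨
  (¬ HasGlobalFix φ₁ ∧ ¬ HasGlobalFix φ₂ ∧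
    ∃ h : S1 → S1, DegOneMonotone h ∧ ∀ g x, φ₂.toFun g (h x) = h (φ₁.toFun g x))

namespace SCA
open Set Filter Topology


open Set Filter Topology

lemma per_int {H : ℝ → ℝ} (hp : ∀ x, H (x + 1) = H x + 1) (x : ℝ) (n : ℤ) :
    H (x + n) = H x + n := by
  induction n using Int.induction_on with
  | zero => simp
  | succ k ih =>
      have h2 : x + ((k : ℤ) + 1 : ℤ) = (x + (k:ℤ)) + 1 := by push_cast; ring
      rw [h2, hp, ih]; push_cast; ring
  | pred k ih =>
      have h2 : x + (-(k:ℤ) - 1 : ℤ) + 1 = x + (-(k:ℤ) : ℤ) := by push_cast; ring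
      have := hp (x + (-(k:ℤ) - 1 : ℤ))
      rw [h2, ih] at this
      push_cast at this ⊢
      linarith

lemma s1_coe_eq_iff {a b : ℝ} : (a : S1) = (b : S1) ↔ ∃ n : ℤ, a = b + n := by
  rw [show ((a : S1) = (b : S1)) ↔ a - b ∈ AddSubgroup.zmultiples (1:ℝ) from
    QuotientAddGroup.eq_iff_sub_mem]
  constructor
  · rintro h
    obtain ⟨n, hn⟩ := AddSubgroup.mem_zmultiples_iff.mp h
    exact ⟨n, by simp at hn; linarith⟩
  · rintro ⟨n, rfl⟩
    exact AddSubgroup.mem_zmultiples_iff.mpr ⟨n, by simp⟩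

lemma s1_coe_add_int (a : ℝ) (n : ℤ) : ((a + n : ℝ) : S1) = (a : S1) :=
  s1_coe_eq_iff.mpr ⟨n, rfl⟩

/-- Descend a map commuting with unit translation to the circle. -/
lemma descend {H : ℝ → ℝ} (hp : ∀ x, H (x + 1) = H x + 1) :
    ∃ h : S1 → S1, ∀ x : ℝ, (H x : S1) = h (x : S1) := by
  haveI : Fact ((0:ℝ) < 1) := ⟨one_pos⟩
  refine ⟨fun z => (H ((AddCircle.equivIco 1 0 z : ℝ)) : S1), fun x => ?_⟩
  set r : ℝ := (AddCircle.equivIco 1 0 (x : S1) : ℝ) with hr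
  have hcoe : (r : S1) = (x : S1) := (AddCircle.equivIco 1 0).symm_apply_apply (x : S1)
  obtain ⟨n, hn⟩ := s1_coe_eq_iff.mp hcoe
  have hHr : H r = H x + n := by rw [hn]; exact per_int hp x n
  show (H x : S1) = (H r : S1)
  rw [hHr, s1_coe_add_int]


open Set Filter Topology

/-- A strictly monotone lift of a circle bijection is surjective. -/
lemma lift_surj {f : S1 ≃ₜ S1} {F : ℝ → ℝ} (hF : StrictMono F)
    (hp : ∀ x, F (x + 1) = F x + 1) (hc : ∀ x : ℝ, (F x : S1) = f (x : S1)) :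
    Function.Surjective F := by
  intro z
  -- find w : S1 with f w = π z
  obtain ⟨w, hw⟩ := f.toEquiv.surjective (z : S1)
  obtain ⟨t, rfl⟩ := QuotientAddGroup.mk_surjective w
  have : (F t : S1) = (z : S1) := by rw [hc]; exact hw
  obtain ⟨n, hn⟩ := s1_coe_eq_iff.mp this
  refine ⟨t + (-n : ℤ), ?_⟩
  rw [per_int hp t (-n)]
  push_cast
  linarith

/-- Package a lift as an order isomorphism of `ℝ`. -/
def liftIso {F : ℝ → ℝ} (hF : StrictMono F) (hs : Function.Surjective F) : ℝ ≃o ℝ :=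
  StrictMono.orderIsoOfSurjective F hF hs

lemma liftIso_apply {F : ℝ → ℝ} (hF : StrictMono F) (hs : Function.Surjective F) (x : ℝ) :
    liftIso hF hs x = F x := rfl


open Set Filter Topology

variable {H : ℝ → ℝ}

/-- Left-continuous regularization. -/
def Kf (H : ℝ → ℝ) : ℝ → ℝ := fun x => sSup (H '' Iio x)

lemma himg_ne (x : ℝ) : (H '' Iio x).Nonempty := ⟨H (x - 1), ⟨x - 1, by simp, rfl⟩⟩

lemma himg_bdd (hm : Monotone H) (x : ℝ) : BddAbove (H '' Iio x) :=
  ⟨H x, by rintro y ⟨t, ht, rfl⟩; exact hm (le_of_lt ht)⟩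

lemma K_mono (hm : Monotone H) : Monotone (Kf H) := fun x y hxy =>
  csSup_le_csSup (himg_bdd hm y) (himg_ne x) (image_mono (Iio_subset_Iio hxy))

lemma K_le_H (hm : Monotone H) (x : ℝ) : Kf H x ≤ H x :=
  csSup_le (himg_ne x) (by rintro y ⟨t, ht, rfl⟩; exact hm ht.le)

lemma H_le_K (hm : Monotone H) {t x : ℝ} (h : t < x) : H t ≤ Kf H x :=
  le_csSup (himg_bdd hm x) ⟨t, h, rfl⟩

lemma K_per (hm : Monotone H) (hp : ∀ x, H (x + 1) = H x + 1) (x : ℝ) :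
    Kf H (x + 1) = Kf H x + 1 := by
  have himg : H '' Iio (x + 1) = (OrderIso.addRight (1:ℝ)) '' (H '' Iio x) := by
    ext y
    constructor
    · rintro ⟨t, ht, rfl⟩
      refine ⟨H (t - 1), ⟨t - 1, by simp only [mem_Iio]; simp only [mem_Iio] at ht; linarith, rfl⟩, ?_⟩
      show H (t-1) + 1 = H t
      rw [← hp (t-1)]; ring_nf
    · rintro ⟨y, ⟨t, ht, rfl⟩, rfl⟩
      refine ⟨t + 1, by simp only [mem_Iio] at ht ⊢; linarith, ?_⟩
      show H (t + 1) = H t + 1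
      exact hp t
  rw [Kf, himg, ← OrderIso.map_csSup' _ (himg_ne x) (himg_bdd hm x)]
  rfl

lemma K_left (hm : Monotone H) (x : ℝ) : sSup (Kf H '' Iio x) = Kf H x := by
  have hne : (Kf H '' Iio x).Nonempty := ⟨Kf H (x-1), ⟨x-1, by simp, rfl⟩⟩
  have hbdd : BddAbove (Kf H '' Iio x) :=
    ⟨Kf H x, by rintro y ⟨s, hs, rfl⟩; exact K_mono hm hs.le⟩
  apply le_antisymm
  · refine csSup_le hne ?_
    rintro y ⟨t, ht, rfl⟩
    exact K_mono hm ht.le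
  · refine csSup_le (himg_ne x) ?_
    rintro y ⟨t, ht, rfl⟩
    simp only [mem_Iio] at ht
    have h1 : H t ≤ Kf H ((t + x)/2) := H_le_K hm (by linarith)
    have h2 : Kf H ((t + x)/2) ≤ sSup (Kf H '' Iio x) :=
      le_csSup hbdd ⟨(t+x)/2, by simp only [mem_Iio]; linarith, rfl⟩
    linarith

lemma K_tendsto_left (hm : Monotone H) (x : ℝ) :
    Tendsto (Kf H) (𝓝[<] x) (𝓝 (Kf H x)) := by
  have := (K_mono hm).tendsto_nhdsLT x
  rwa [K_left hm] at this

/-- Generalized inverse of `K`. -/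
def Kinv (H : ℝ → ℝ) : ℝ → ℝ := fun y => sSup {x | Kf H x ≤ y}

lemma setA_ne (hm : Monotone H) (hp : ∀ x, H (x + 1) = H x + 1) (y : ℝ) :
    {x | Kf H x ≤ y}.Nonempty := by
  set n : ℤ := ⌈Kf H 0 - y⌉
  refine ⟨0 + (-n : ℤ), ?_⟩
  have := per_int (K_per hm hp) 0 (-n)
  simp only [mem_setOf_eq, this]
  push_cast
  have := Int.le_ceil (Kf H 0 - y)
  linarith

lemma setA_bdd (hm : Monotone H) (hp : ∀ x, H (x + 1) = H x + 1) (y : ℝ) :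
    BddAbove {x | Kf H x ≤ y} := by
  obtain ⟨n, hn⟩ : ∃ n : ℤ, y - Kf H 0 < (n:ℝ) := exists_int_gt _
  have hK : y < Kf H (0 + (n:ℤ)) := by
    rw [per_int (K_per hm hp) 0 n]
    linarith
  refine ⟨(0:ℝ) + (n:ℤ), fun a ha => ?_⟩
  by_contra hc
  push_neg at hc
  exact absurd (le_trans (K_mono hm hc.le) ha) (not_le.mpr hK)

lemma gc (hm : Monotone H) (hp : ∀ x, H (x + 1) = H x + 1) {x y : ℝ} :
    Kf H x ≤ y ↔ x ≤ Kinv H y := by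
  constructor
  · intro h; exact le_csSup (setA_bdd hm hp y) h
  · intro h
    rw [← K_left hm]
    refine csSup_le ⟨Kf H (x-1), ⟨x-1, by simp, rfl⟩⟩ ?_
    rintro z ⟨t, ht, rfl⟩
    simp only [mem_Iio] at ht
    obtain ⟨a, ha, hta⟩ := exists_lt_of_lt_csSup (setA_ne hm hp y) (lt_of_lt_of_le ht h)
    exact le_trans (K_mono hm hta.le) ha

lemma Kinv_mono (hm : Monotone H) (hp : ∀ x, H (x + 1) = H x + 1) :
    Monotone (Kinv H) := fun y y' hyy => by
  have h1 : Kf H (Kinv H y) ≤ y := (gc hm hp).mpr le_rfl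
  exact (gc hm hp).mp (le_trans h1 hyy)

lemma Kinv_per (hm : Monotone H) (hp : ∀ x, H (x + 1) = H x + 1) (y : ℝ) :
    Kinv H (y + 1) = Kinv H y + 1 := by
  have key : ∀ x : ℝ, x ≤ Kinv H (y + 1) ↔ x ≤ Kinv H y + 1 := by
    intro x
    rw [← gc hm hp]
    have h1 : Kf H (x - 1) = Kf H x - 1 := by
      have := K_per hm hp (x - 1); rw [show x - 1 + 1 = x by ring] at this; linarith
    constructor
    · intro h
      have : Kf H (x - 1) ≤ y := by rw [h1]; linarith
      have := (gc hm hp).mp this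
      linarith
    · intro h
      have : x - 1 ≤ Kinv H y := by linarith
      have := (gc hm hp).mpr this
      rw [h1] at this; linarith
  exact le_antisymm ((key _).mp le_rfl) ((key _).mpr le_rfl)


open Set Filter Topology

lemma zClosed : IsClosed (range ((↑) : ℤ → ℝ)) :=
  Int.isClosedEmbedding_coe_real.isClosed_range

lemma half_not_int (c n : ℤ) : ((n : ℝ) ≠ (c:ℝ) + 1/2) := by
  intro h
  have : (2*n : ℤ) = 2*c + 1 := by
    exact_mod_cast (by push_cast; linarith : ((2*n : ℤ):ℝ) = ((2*c+1 : ℤ):ℝ))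
  omega

section pergroup
variable {H : ℝ → ℝ} (hm : Monotone H) (hp : ∀ x, H (x + 1) = H x + 1)
  (E₁ E₂ : ℝ ≃o ℝ) (hp₂ : ∀ x, E₂ (x + 1) = E₂ x + 1)
  (hcomm : ∀ t : ℝ, ∃ n : ℤ, H (E₁ t) - E₂ (H t) = n)

include hm in
lemma A_left (x : ℝ) : Kf H (E₁ x) = sSup ((H ∘ E₁) '' Iio x) := by
  rw [Kf, ← E₁.image_Iio, image_comp]

include hm in
lemma B_left (x : ℝ) : E₂ (Kf H x) = sSup ((E₂ : ℝ → ℝ) '' (H '' Iio x)) :=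
  E₂.map_csSup' (himg_ne x) (himg_bdd hm x)

include hm hcomm in
lemma dint (x : ℝ) : ∃ n : ℤ, Kf H (E₁ x) - E₂ (Kf H x) = n := by
  have hu : Monotone (H ∘ E₁) := hm.comp E₁.monotone
  have hv : Monotone ((E₂ : ℝ → ℝ) ∘ H) := E₂.monotone.comp hm
  have tu : Tendsto (H ∘ E₁) (𝓝[<] x) (𝓝 (Kf H (E₁ x))) := by
    rw [A_left hm]; exact hu.tendsto_nhdsLT x
  have tv : Tendsto ((E₂ : ℝ → ℝ) ∘ H) (𝓝[<] x) (𝓝 (E₂ (Kf H x))) := by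
    rw [B_left hm, ← image_comp]; exact hv.tendsto_nhdsLT x
  have td : Tendsto (fun t => H (E₁ t) - E₂ (H t)) (𝓝[<] x)
      (𝓝 (Kf H (E₁ x) - E₂ (Kf H x))) := tu.sub tv
  have : Kf H (E₁ x) - E₂ (Kf H x) ∈ range ((↑) : ℤ → ℝ) := by
    refine zClosed.mem_of_tendsto td (Eventually.of_forall fun t => ?_)
    obtain ⟨n, hn⟩ := hcomm t
    exact ⟨n, hn.symm⟩
  obtain ⟨n, hn⟩ := this
  exact ⟨n, hn.symm⟩

include hm hp hp₂ hcomm in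
/-- Either the defect is constant, or `Kf H` is constant on an interval of length one. -/
lemma df_const_or_degenerate :
    (∃ c : ℤ, ∀ x, Kf H (E₁ x) = E₂ (Kf H x) + c) ∨
    (∃ p : ℝ, ∀ t ∈ Ioc p (p + 1), Kf H t = Kf H (p + 1)) := by
  by_cases hnd : ∃ p : ℝ, ∀ t ∈ Ioc p (p + 1), Kf H t = Kf H (p + 1)
  · exact Or.inr hnd
  left
  have hAm : Monotone (fun x => Kf H (E₁ x)) := (K_mono hm).comp E₁.monotone
  have hBm : Monotone (fun x => E₂ (Kf H x)) := E₂.monotone.comp (K_mono hm)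
  -- continuity of the defect
  have hcont : Continuous (fun x => Kf H (E₁ x) - E₂ (Kf H x)) := by
    rw [continuous_iff_continuousAt]
    intro x
    have hleft : Tendsto (fun x => Kf H (E₁ x) - E₂ (Kf H x)) (𝓝[<] x)
        (𝓝 (Kf H (E₁ x) - E₂ (Kf H x))) := by
      have tA : Tendsto (fun x => Kf H (E₁ x)) (𝓝[<] x) (𝓝 (Kf H (E₁ x))) := by
        have h1 : Tendsto E₁ (𝓝[<] x) (𝓝[<] (E₁ x)) := by
          apply tendsto_nhdsWithin_of_tendsto_nhds_of_eventually_within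
          · exact (E₁.continuous.tendsto x).mono_left nhdsWithin_le_nhds
          · exact eventually_nhdsWithin_of_forall fun t ht => by
              simp only [mem_Iio] at ht ⊢; exact E₁.strictMono ht
        exact (K_tendsto_left hm (E₁ x)).comp h1
      have tB : Tendsto (fun x => E₂ (Kf H x)) (𝓝[<] x) (𝓝 (E₂ (Kf H x))) :=
        (E₂.continuous.tendsto _).comp (K_tendsto_left hm x)
      exact tA.sub tB
    have hright : Tendsto (fun x => Kf H (E₁ x) - E₂ (Kf H x)) (𝓝[>] x)
        (𝓝 (Kf H (E₁ x) - E₂ (Kf H x))) := by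
      have tA : Tendsto (fun x => Kf H (E₁ x)) (𝓝[>] x)
          (𝓝 (sInf ((fun x => Kf H (E₁ x)) '' Ioi x))) := hAm.tendsto_nhdsGT x
      have tB : Tendsto (fun x => E₂ (Kf H x)) (𝓝[>] x)
          (𝓝 (sInf ((fun x => E₂ (Kf H x)) '' Ioi x))) := hBm.tendsto_nhdsGT x
      set a := sInf ((fun x => Kf H (E₁ x)) '' Ioi x) with ha
      set b := sInf ((fun x => E₂ (Kf H x)) '' Ioi x) with hb
      have hane : ((fun x => Kf H (E₁ x)) '' Ioi x).Nonempty := ⟨_, ⟨x+1, by simp, rfl⟩⟩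
      have hbne : ((fun x => E₂ (Kf H x)) '' Ioi x).Nonempty := ⟨_, ⟨x+1, by simp, rfl⟩⟩
      have habdd : BddBelow ((fun x => Kf H (E₁ x)) '' Ioi x) :=
        ⟨Kf H (E₁ x), by rintro y ⟨t, ht, rfl⟩; exact hAm (le_of_lt ht)⟩
      have hbbdd : BddBelow ((fun x => E₂ (Kf H x)) '' Ioi x) :=
        ⟨E₂ (Kf H x), by rintro y ⟨t, ht, rfl⟩; exact hBm (le_of_lt ht)⟩
      have haA : Kf H (E₁ x) ≤ a :=
        le_csInf hane (by rintro y ⟨t, ht, rfl⟩; exact hAm (le_of_lt ht))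
      have hbB : E₂ (Kf H x) ≤ b :=
        le_csInf hbne (by rintro y ⟨t, ht, rfl⟩; exact hBm (le_of_lt ht))
      obtain ⟨n1, hn1⟩ : ∃ n : ℤ, a - b = n := by
        have td : Tendsto (fun t => Kf H (E₁ t) - E₂ (Kf H t)) (𝓝[>] x) (𝓝 (a - b)) :=
          tA.sub tB
        have : a - b ∈ range ((↑) : ℤ → ℝ) := by
          refine zClosed.mem_of_tendsto td (Eventually.of_forall fun t => ?_)
          obtain ⟨n, hn⟩ := dint hm E₁ E₂ hcomm t
          exact ⟨n, hn.symm⟩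
        obtain ⟨n, hn⟩ := this; exact ⟨n, hn.symm⟩
      obtain ⟨n2, hn2⟩ := dint hm E₁ E₂ hcomm x
      have key : a - b = Kf H (E₁ x) - E₂ (Kf H x) := by
        rcases lt_trichotomy n1 n2 with hlt | heq | hgt
        · -- jB ≥ 1: degenerate at p = x
          exfalso
          have hcast : (n1:ℝ) + 1 ≤ n2 := by exact_mod_cast Int.add_one_le_iff.mpr hlt
          have hjB : E₂ (Kf H x) + 1 ≤ b := by linarith
          have hK1 : ∀ t, x < t → Kf H x + 1 ≤ Kf H t := by
            intro t ht
            have hBt : E₂ (Kf H x) + 1 ≤ E₂ (Kf H t) :=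
              le_trans hjB (csInf_le hbbdd ⟨t, ht, rfl⟩)
            have : E₂ (Kf H x + 1) ≤ E₂ (Kf H t) := by rw [hp₂]; exact hBt
            exact E₂.le_iff_le.mp this
          exact hnd ⟨x, fun t ht => le_antisymm (K_mono hm ht.2)
            (by have := hK1 t ht.1; rw [K_per hm hp]; linarith)⟩
        · rw [hn1, hn2, heq]
        · -- jA ≥ 1: degenerate at p = E₁ x
          exfalso
          have hcast : (n2:ℝ) + 1 ≤ n1 := by exact_mod_cast Int.add_one_le_iff.mpr hgt
          have hjA : Kf H (E₁ x) + 1 ≤ a := by linarith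
          have hK1 : ∀ s, E₁ x < s → Kf H (E₁ x) + 1 ≤ Kf H s := by
            intro s hs
            have hts : x < E₁.symm s := by
              have := E₁.symm.strictMono hs
              simpa using this
            have h2 : Kf H (E₁ x) + 1 ≤ Kf H (E₁ (E₁.symm s)) :=
              le_trans hjA (csInf_le habdd ⟨E₁.symm s, hts, rfl⟩)
            simpa using h2
          exact hnd ⟨E₁ x, fun t ht => le_antisymm (K_mono hm ht.2)
            (by have := hK1 t ht.1; rw [K_per hm hp]; linarith)⟩
      rw [← key]
      exact tA.sub tB
    have hsup : Tendsto (fun x => Kf H (E₁ x) - E₂ (Kf H x)) (𝓝[<] x ⊔ 𝓝[≥] x)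
        (𝓝 (Kf H (E₁ x) - E₂ (Kf H x))) := by
      rw [tendsto_sup]
      refine ⟨hleft, ?_⟩
      have hsp : (𝓝[≥] x : Filter ℝ) = 𝓝[{x}] x ⊔ 𝓝[>] x := by
        rw [← nhdsWithin_union]
        congr 1
        ext t; simp [le_iff_lt_or_eq, or_comm, eq_comm]
      rw [hsp, tendsto_sup, nhdsWithin_singleton]
      exact ⟨tendsto_pure_nhds _ x, hright⟩
    rwa [nhdsLT_sup_nhdsGE] at hsup
  -- constancy via IVT
  obtain ⟨c, hc⟩ := dint hm E₁ E₂ hcomm 0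
  refine ⟨c, fun x => ?_⟩
  have hdx : Kf H (E₁ x) - E₂ (Kf H x) = Kf H (E₁ 0) - E₂ (Kf H 0) := by
    by_contra hne
    obtain ⟨nx, hnx⟩ := dint hm E₁ E₂ hcomm x
    have key : ∀ w : ℝ, w ∈ uIcc (Kf H (E₁ 0) - E₂ (Kf H 0)) (Kf H (E₁ x) - E₂ (Kf H x)) →
        ∃ t, Kf H (E₁ t) - E₂ (Kf H t) = w := by
      intro w hw
      obtain ⟨t, _, ht⟩ := intermediate_value_uIcc (a := (0:ℝ)) (b := x)
        (f := fun x => Kf H (E₁ x) - E₂ (Kf H x)) hcont.continuousOn hw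
      exact ⟨t, ht⟩
    rcases lt_or_gt_of_ne hne with hlt | hlt
    · -- d x < d 0 : nx + 1 ≤ c
      have h1 : (nx:ℝ) + 1 ≤ c := by
        rw [hc, hnx] at hlt
        exact_mod_cast Int.add_one_le_iff.mpr (by exact_mod_cast hlt)
      obtain ⟨t, ht⟩ := key ((nx:ℝ) + 1/2) (by
        rw [uIcc_comm, uIcc_of_le hlt.le, hnx, hc]
        constructor <;> simp <;> linarith)
      obtain ⟨n, hn⟩ := dint hm E₁ E₂ hcomm t
      exact half_not_int nx n (by rw [← hn, ht])
    · have h1 : (c:ℝ) + 1 ≤ nx := by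
        rw [hc, hnx] at hlt
        exact_mod_cast Int.add_one_le_iff.mpr (by exact_mod_cast hlt)
      obtain ⟨t, ht⟩ := key ((c:ℝ) + 1/2) (by
        rw [uIcc_of_le hlt.le, hc, hnx]
        constructor <;> simp <;> linarith)
      obtain ⟨n, hn⟩ := dint hm E₁ E₂ hcomm t
      exact half_not_int c n (by rw [← hn, ht])
  have : Kf H (E₁ x) - E₂ (Kf H x) = c := by rw [hdx, hc]
  linarith

end pergroup

section symmkernel

variable {G : Type} [Group G] (φ₁ φ₂ : RGp G)

/-- Choice of order-isomorphism lifts for an action. -/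
lemma lifts_exist (φ : RGp G) : ∀ g : G, ∃ E : ℝ ≃o ℝ,
    (∀ x, E (x + 1) = E x + 1) ∧ ∀ x : ℝ, ((E x : ℝ) : S1) = φ.toFun g (x : S1) := by
  intro g
  obtain ⟨F, hF, hFp, hFc⟩ := φ.op g
  refine ⟨liftIso hF (lift_surj hF hFp hFc), ?_, ?_⟩
  · intro x; rw [liftIso_apply, liftIso_apply]; exact hFp x
  · intro x; rw [liftIso_apply]; exact hFc x

/-- The heart of symmetry: construct the reverse semiconjugacy. -/
lemma symm_construct
    (hnf₂ : ¬ HasGlobalFix φ₂)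
    {h : S1 → S1} {H : ℝ → ℝ} (hm : Monotone H) (hpH : ∀ x, H (x + 1) = H x + 1)
    (hπ : ∀ x : ℝ, ((H x : S1)) = h (x : S1))
    (heq : ∀ g x, φ₂.toFun g (h x) = h (φ₁.toFun g x)) :
    ∃ h' : S1 → S1, DegOneMonotone h' ∧ ∀ g x, φ₁.toFun g (h' x) = h' (φ₂.toFun g x) := by
  classical
  choose E₁ hE₁p hE₁c using lifts_exist φ₁
  choose E₂ hE₂p hE₂c using lifts_exist φ₂
  -- pointwise integrality
  have hcomm : ∀ g : G, ∀ t : ℝ, ∃ n : ℤ, H (E₁ g t) - E₂ g (H t) = n := by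
    intro g t
    have : ((H (E₁ g t) : ℝ) : S1) = ((E₂ g (H t) : ℝ) : S1) := by
      rw [hπ, hE₁c, hE₂c, hπ]
      rw [heq]
    obtain ⟨n, hn⟩ := s1_coe_eq_iff.mp this
    exact ⟨n, by linarith⟩
  -- degenerate case is impossible
  by_cases hnd : ∃ p : ℝ, ∀ t ∈ Ioc p (p + 1), Kf H t = Kf H (p + 1)
  · exfalso
    obtain ⟨p, hdeg⟩ := hnd
    have Kconst : ∀ t : ℝ, ((Kf H t : ℝ) : S1) = ((Kf H (p+1) : ℝ) : S1) := by
      intro t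
      set n : ℤ := ⌈t - p - 1⌉ with hn
      have h1 : t - n ∈ Ioc p (p + 1) := by
        constructor
        · have := Int.ceil_lt_add_one (t - p - 1)
          rw [← hn] at this; linarith
        · have := Int.le_ceil (t - p - 1)
          rw [← hn] at this; linarith
      have h2 : Kf H t = Kf H (t - n) + n := by
        have := per_int (K_per hm hpH) (t - n) n
        rw [show t - (n:ℝ) + n = t by ring] at this
        linarith
      rw [h2, s1_coe_add_int, hdeg _ h1]
    apply hnf₂
    refine ⟨((Kf H (p+1) : ℝ) : S1), fun g => ?_⟩
    obtain ⟨n, hn⟩ := dint hm (E₁ g) (E₂ g) (hcomm g) (p+1)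
    have : ((E₂ g (Kf H (p+1)) : ℝ) : S1) = ((Kf H (p+1) : ℝ) : S1) := by
      have h3 : E₂ g (Kf H (p+1)) = Kf H (E₁ g (p+1)) + (-n : ℤ) := by push_cast; linarith
      rw [h3, s1_coe_add_int, Kconst]
    rw [← hE₂c g, this]
  -- nondegenerate: constant defects
  have hconst : ∀ g : G, ∃ c : ℤ, ∀ x, Kf H (E₁ g x) = E₂ g (Kf H x) + c := fun g =>
    (df_const_or_degenerate hm hpH (E₁ g) (E₂ g) (hE₂p g) (hcomm g)).resolve_right hnd
  choose c hc using hconst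
  -- the inverse map
  obtain ⟨h', hh'⟩ := descend (Kinv_per hm hpH)
  refine ⟨h', ⟨Kinv H, Kinv_mono hm hpH, Kinv_per hm hpH, hh'⟩, ?_⟩
  intro g z
  induction z using QuotientAddGroup.induction_on with
  | H y =>
  -- key real identity
  have key : E₁ g (Kinv H y) = Kinv H (E₂ g y) + c g := by
    have hiff : ∀ x : ℝ, x ≤ E₁ g (Kinv H y) ↔ x ≤ Kinv H (E₂ g y) + c g := by
      intro x
      have e1 : x ≤ E₁ g (Kinv H y) ↔ Kf H ((E₁ g).symm x) ≤ y := by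
        rw [← (E₁ g).symm.le_iff_le]
        simp only [OrderIso.symm_apply_apply]
        exact Iff.symm (gc hm hpH)
      have e2 : Kf H ((E₁ g).symm x) ≤ y ↔ Kf H x - c g ≤ E₂ g y := by
        have h3 := hc g ((E₁ g).symm x)
        rw [OrderIso.apply_symm_apply] at h3
        constructor
        · intro hle
          have := (E₂ g).monotone hle
          linarith
        · intro hle
          have h4 : E₂ g (Kf H ((E₁ g).symm x)) ≤ E₂ g y := by linarith
          exact (E₂ g).le_iff_le.mp h4
      have e3 : Kf H x - c g ≤ E₂ g y ↔ x ≤ Kinv H (E₂ g y) + c g := by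
        have h5 : Kf H (x + (-(c g) : ℤ)) = Kf H x - c g := by
          have := per_int (K_per hm hpH) x (-(c g))
          push_cast at this ⊢
          linarith
        rw [← h5, gc hm hpH]
        constructor <;> intro h6 <;> [push_cast at h6 ⊢; push_cast at h6 ⊢] <;> linarith
      rw [e1, e2, e3]
    exact le_antisymm ((hiff _).mp le_rfl) ((hiff _).mpr le_rfl)
  show φ₁.toFun g (h' (y : S1)) = h' (φ₂.toFun g (y : S1))
  calc φ₁.toFun g (h' (y : S1)) = φ₁.toFun g ((Kinv H y : ℝ) : S1) := by rw [← hh']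
    _ = ((E₁ g (Kinv H y) : ℝ) : S1) := by rw [← hE₁c]
    _ = ((Kinv H (E₂ g y) : ℝ) : S1) := by rw [key, s1_coe_add_int]
    _ = h' ((E₂ g y : ℝ) : S1) := by rw [hh']
    _ = h' (φ₂.toFun g (y : S1)) := by rw [hE₂c]

end symmkernel
end SCA

open SCA in
/-- Semiconjugacy is an equivalence relation on `R_G`. -/
theorem semiconjugacy_equivalence (G : Type) [Group G] :
    Equivalence (fun φ₁ φ₂ : RGp G => Semiconj φ₁ φ₂) := by
  constructor
  · -- reflexivity
    intro φ
    by_cases hf : HasGlobalFix φ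
    · exact Or.inl ⟨hf, hf⟩
    · refine Or.inr ⟨hf, hf, id, ⟨id, monotone_id, by simp, fun x => rfl⟩, fun g x => rfl⟩
  · -- symmetry
    rintro φ₁ φ₂ (⟨h1, h2⟩ | ⟨hnf₁, hnf₂, h, ⟨H, hm, hpH, hπ⟩, heq⟩)
    · exact Or.inl ⟨h2, h1⟩
    · obtain ⟨h', hd, he⟩ := symm_construct φ₁ φ₂ hnf₂ hm hpH hπ heq
      exact Or.inr ⟨hnf₂, hnf₁, h', hd, he⟩
  · -- transitivity
    rintro φ₁ φ₂ φ₃ (⟨h1, h2⟩ | ⟨hnf₁, hnf₂, h, ⟨H, hm, hpH, hπ⟩, heq⟩)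
      <;> rintro (⟨h1', h2'⟩ | ⟨hnf₂', hnf₃, h', ⟨H', hm', hpH', hπ'⟩, heq'⟩)
    · exact Or.inl ⟨h1, h2'⟩
    · exact absurd h2 hnf₂'
    · exact absurd h1' hnf₂
    · refine Or.inr ⟨hnf₁, hnf₃, h' ∘ h, ⟨H' ∘ H, hm'.comp hm, fun x => by
        simp only [Function.comp_apply, hpH, hpH'], fun x => by
        simp only [Function.comp_apply, hπ', hπ]⟩, fun g x => by
        simp only [Function.comp_apply, heq', heq]⟩
end
end

section
/- Let φ¹, φ² ∈ R_G and for i = 1,2 let F^i ⊂ S¹ be a φ^i(G)-invariant subset. If there is a cyclic-order-preserving bijection ξ : F¹ → F² that is (φ¹,φ²)-equivariant, i.e. ξ∘φ¹(g) = φ²(g)∘ξ on F¹ for all g ∈ G, then φ¹ and φ² are semiconjugate. -/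
noncomputable section

/-- Cyclic (weak) betweenness on the circle: `y` lies on the positively oriented
closed arc from `x` to `z`. -/
def CBtw (x y z : S1) : Prop :=
  ∃ a b c : ℝ, (a : S1) = x ∧ (b : S1) = y ∧ (c : S1) = z ∧ a ≤ b ∧ b ≤ c ∧ c ≤ a + 1

/-- Strict cyclic betweenness on the circle. -/
def CSBtw (x y z : S1) : Prop :=
  ∃ a b c : ℝ, (a : S1) = x ∧ (b : S1) = y ∧ (c : S1) = z ∧ a < b ∧ b < c ∧ c < a + 1

/-- `ξ` preserves the cyclic order on `F`. -/
def COPOn (ξ : S1 → S1) (F : Set S1) : Prop :=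
  ∀ x ∈ F, ∀ y ∈ F, ∀ z ∈ F, CSBtw x y z → CSBtw (ξ x) (ξ y) (ξ z)

/-- The closed arc `[x,y]` from `x` to `y` (positively oriented). -/
def arcCC (x y : S1) : Set S1 := {z | CBtw x z y}


instance real_fact_zero_lt_one : Fact ((0 : ℝ) < 1) := ⟨one_pos⟩

namespace SCP
open Set

lemma s1_eq_iff {a b : ℝ} : (a : S1) = (b : S1) ↔ ∃ k : ℤ, b = a + k := by
  rw [QuotientAddGroup.eq_iff_sub_mem, AddSubgroup.mem_zmultiples_iff]
  constructor
  · rintro ⟨k, hk⟩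
    refine ⟨-k, ?_⟩
    have : (k : ℝ) * 1 = a - b := by rw [← hk]; simp [zsmul_eq_mul]
    push_cast
    linarith
  · rintro ⟨k, rfl⟩
    refine ⟨-k, ?_⟩; simp [zsmul_eq_mul]

lemma s1_coe_add_int (a : ℝ) (k : ℤ) : ((a + k : ℝ) : S1) = (a : S1) :=
  (s1_eq_iff.mpr ⟨k, rfl⟩).symm

lemma s1_coe_sub_int (a : ℝ) (k : ℤ) : ((a - k : ℝ) : S1) = (a : S1) := by
  have := s1_coe_add_int (a - k) k
  rw [sub_add_cancel] at this
  exact this.symm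

def rep (a : ℝ) (s : S1) : ℝ := (AddCircle.equivIco 1 a s : ℝ)

lemma rep_mem (a : ℝ) (s : S1) : rep a s ∈ Set.Ico a (a + 1) := (AddCircle.equivIco 1 a s).2

lemma rep_coe (a : ℝ) (s : S1) : ((rep a s : ℝ) : S1) = s := by
  change ((AddCircle.equivIco 1 a).symm (AddCircle.equivIco 1 a s)) = s
  exact Equiv.symm_apply_apply _ _

lemma rep_eq_of {a b : ℝ} (hb : b ∈ Set.Ico a (a + 1)) : rep a ((b : ℝ) : S1) = b := by
  have h1 := rep_coe a ((b : ℝ) : S1)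
  exact (AddCircle.coe_eq_coe_iff_of_mem_Ico (rep_mem a _) hb).mp h1

lemma eq_of_coe_eq_mem {a u v : ℝ} (hu : u ∈ Set.Ico a (a + 1)) (hv : v ∈ Set.Ico a (a + 1))
    (h : (u : S1) = (v : S1)) : u = v :=
  (AddCircle.coe_eq_coe_iff_of_mem_Ico hu hv).mp h

variable {G : Type} [Group G]

lemma RGp.apply_inv_apply (φ : RGp G) (g : G) (s : S1) : φ.toFun g (φ.toFun g⁻¹ s) = s := by
  have h : φ.toFun g * φ.toFun g⁻¹ = 1 := by rw [← map_mul, mul_inv_cancel, map_one]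
  have : (φ.toFun g * φ.toFun g⁻¹) s = (1 : S1 ≃ₜ S1) s := by rw [h]
  exact this

def lft (φ : RGp G) (g : G) : ℝ → ℝ := (φ.op g).choose

lemma lft_smono (φ : RGp G) (g : G) : StrictMono (lft φ g) := (φ.op g).choose_spec.1
lemma lft_add_one (φ : RGp G) (g : G) (x : ℝ) : lft φ g (x + 1) = lft φ g x + 1 :=
  (φ.op g).choose_spec.2.1 x
lemma lft_coe (φ : RGp G) (g : G) (x : ℝ) : ((lft φ g x : ℝ) : S1) = φ.toFun g (x : S1) :=
  (φ.op g).choose_spec.2.2 x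

lemma add_int_of_add_one {f : ℝ → ℝ} (hf : ∀ x, f (x + 1) = f x + 1) (x : ℝ) (k : ℤ) :
    f (x + k) = f x + k := by
  have hper : Function.Periodic (fun x => f x - x) 1 := fun x => by
    simp only [hf]; ring
  have h2 := (hper.int_mul k) x
  simp only [mul_one] at h2
  linarith

lemma lft_add_int (φ : RGp G) (g : G) (x : ℝ) (k : ℤ) : lft φ g (x + k) = lft φ g x + k :=
  add_int_of_add_one (lft_add_one φ g) x k

lemma lft_surj (φ : RGp G) (g : G) : Function.Surjective (lft φ g) := by
  intro w
  obtain ⟨y, hy⟩ := QuotientAddGroup.mk_surjective ((φ.toFun g).symm (w : S1))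
  have h1 : ((lft φ g y : ℝ) : S1) = (w : S1) := by
    rw [lft_coe]
    show φ.toFun g ((y : ℝ) : S1) = (w : S1)
    rw [hy, Homeomorph.apply_symm_apply]
  obtain ⟨k, hk⟩ := s1_eq_iff.mp h1
  exact ⟨y + k, by rw [lft_add_int, ← hk]⟩

lemma lft_cont (φ : RGp G) (g : G) : Continuous (lft φ g) := by
  have h := OrderIso.continuous
    (StrictMono.orderIsoOfSurjective (lft φ g) (lft_smono φ g) (lft_surj φ g))
  simpa [StrictMono.coe_orderIsoOfSurjective] using h

lemma csbtw_ne {x y z : S1} (h : CSBtw x y z) : x ≠ y ∧ y ≠ z ∧ x ≠ z := by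
  obtain ⟨a, b, c, ha, hb, hc, hab, hbc, hca⟩ := h
  have key : ∀ u v : ℝ, u < v → v < u + 1 → ((u : S1) ≠ (v : S1)) := by
    intro u v h1 h2 he
    obtain ⟨k, hk⟩ := s1_eq_iff.mp he
    have : (0 : ℝ) < k := by linarith
    have : (k : ℝ) < 1 := by linarith
    have h0 : (0 : ℤ) < k := by exact_mod_cast ‹(0:ℝ) < k›
    have h1' : (k : ℤ) < 1 := by exact_mod_cast ‹(k:ℝ) < 1›
    omega
  refine ⟨?_, ?_, ?_⟩
  · rw [← ha, ← hb]; exact key a b hab (by linarith)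
  · rw [← hb, ← hc]; exact key b c hbc (by linarith)
  · rw [← ha, ← hc]; exact key a c (lt_trans hab hbc) hca

lemma csbtw_asymm {x y z : S1} (h1 : CSBtw x y z) : ¬ CSBtw x z y := by
  rintro ⟨a', b', c', ha', hb', hc', hab', hbc', hca'⟩
  obtain ⟨a, b, c, ha, hb, hc, hab, hbc, hca⟩ := h1
  have he : (a' : S1) = (a : S1) := by rw [ha, ha']
  obtain ⟨k, hk⟩ := s1_eq_iff.mp he
  -- a = a' + k
  have hb'' : ((b' + k : ℝ) : S1) = z := by rw [s1_coe_add_int]; exact hb'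
  have hc'' : ((c' + k : ℝ) : S1) = y := by rw [s1_coe_add_int]; exact hc'
  have hcm : c ∈ Set.Ico a (a + 1) := ⟨le_of_lt (lt_trans hab hbc), hca⟩
  have hbm : b ∈ Set.Ico a (a + 1) := ⟨le_of_lt hab, by linarith⟩
  have hb''m : b' + (k : ℝ) ∈ Set.Ico a (a + 1) := ⟨by linarith, by linarith⟩
  have hc''m : c' + (k : ℝ) ∈ Set.Ico a (a + 1) := ⟨by linarith, by linarith⟩
  have e1 : b' + (k : ℝ) = c := eq_of_coe_eq_mem hb''m hcm (by rw [hb'', hc])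
  have e2 : c' + (k : ℝ) = b := eq_of_coe_eq_mem hc''m hbm (by rw [hc'', hb])
  linarith

lemma csbtw_total {x y z : S1} (hxy : x ≠ y) (hyz : y ≠ z) (hxz : x ≠ z) :
    CSBtw x y z ∨ CSBtw x z y := by
  obtain ⟨a, ha⟩ := QuotientAddGroup.mk_surjective x
  have hbm := rep_mem a y
  have hcm := rep_mem a z
  have hb : ((rep a y : ℝ) : S1) = y := rep_coe a y
  have hc : ((rep a z : ℝ) : S1) = z := rep_coe a z
  have hab : a < rep a y := lt_of_le_of_ne hbm.1
    (fun e => hxy (by rw [← ha, ← hb, ← e]))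
  have hac : a < rep a z := lt_of_le_of_ne hcm.1
    (fun e => hxz (by rw [← ha, ← hc, ← e]))
  have hbc : rep a y ≠ rep a z := fun e => hyz (by rw [← hb, e, hc])
  rcases lt_or_gt_of_ne hbc with h | h
  · exact Or.inl ⟨a, rep a y, rep a z, ha, hb, hc, hab, h, hcm.2⟩
  · exact Or.inr ⟨a, rep a z, rep a y, ha, hc, hb, hac, h, hbm.2⟩

/-- base point image lift -/
def b0 (ξ : S1 → S1) (x₀ : ℝ) : ℝ := rep 0 (ξ ((x₀ : ℝ) : S1))

/-- the monotone lift of ξ, adapted to base point x₀ -/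
def Xi (ξ : S1 → S1) (x₀ : ℝ) (y : ℝ) : ℝ :=
  rep (b0 ξ x₀) (ξ ((y : ℝ) : S1)) + (⌊y - x₀⌋ : ℤ)

lemma Xi_coe (ξ : S1 → S1) (x₀ y : ℝ) : ((Xi ξ x₀ y : ℝ) : S1) = ξ ((y : ℝ) : S1) := by
  unfold Xi
  rw [s1_coe_add_int, rep_coe]

lemma Xi_add_one (ξ : S1 → S1) (x₀ y : ℝ) : Xi ξ x₀ (y + 1) = Xi ξ x₀ y + 1 := by
  unfold Xi
  have h1 : ((y + 1 : ℝ) : S1) = ((y : ℝ) : S1) := by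
    simpa using s1_coe_add_int y 1
  rw [h1]
  have h2 : y + 1 - x₀ = (y - x₀) + 1 := by ring
  rw [h2, Int.floor_add_one]
  push_cast
  ring

lemma Xi_add_int (ξ : S1 → S1) (x₀ y : ℝ) (k : ℤ) : Xi ξ x₀ (y + k) = Xi ξ x₀ y + k :=
  add_int_of_add_one (Xi_add_one ξ x₀) y k

lemma Xi_base (ξ : S1 → S1) (x₀ : ℝ) : Xi ξ x₀ x₀ = b0 ξ x₀ := by
  unfold Xi
  have h1 : ((b0 ξ x₀ : ℝ) : S1) = ξ ((x₀ : ℝ) : S1) := rep_coe 0 _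
  have h2 : rep (b0 ξ x₀) (ξ ((x₀ : ℝ) : S1)) = b0 ξ x₀ := by
    rw [← h1]
    exact rep_eq_of ⟨le_refl _, by linarith⟩
  rw [h2]
  simp

/-- monotonicity on the fundamental interval -/
lemma Xi_mono_Ico {F₁ : Set S1} {ξ : S1 → S1} {x₀ : ℝ} (hx₀ : ((x₀ : ℝ) : S1) ∈ F₁)
    (hcop : COPOn ξ F₁) {y y' : ℝ} (hy : ((y : ℝ) : S1) ∈ F₁) (hy' : ((y' : ℝ) : S1) ∈ F₁)
    (hyI : y ∈ Set.Ico x₀ (x₀ + 1)) (hy'I : y' ∈ Set.Ico x₀ (x₀ + 1)) (hle : y ≤ y') :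
    rep (b0 ξ x₀) (ξ ((y : ℝ) : S1)) ≤ rep (b0 ξ x₀) (ξ ((y' : ℝ) : S1)) := by
  rcases eq_or_lt_of_le hle with rfl | hlt
  · exact le_refl _
  by_cases hyx : y = x₀
  · have : rep (b0 ξ x₀) (ξ ((y : ℝ) : S1)) = b0 ξ x₀ := by
      rw [hyx]
      have h1 : ((b0 ξ x₀ : ℝ) : S1) = ξ ((x₀ : ℝ) : S1) := rep_coe 0 _
      rw [← h1]; exact rep_eq_of ⟨le_refl _, by linarith⟩
    rw [this]
    exact (rep_mem _ _).1
  · have hx₀y : x₀ < y := lt_of_le_of_ne hyI.1 (Ne.symm hyx)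
    have hcs : CSBtw ((x₀ : ℝ) : S1) ((y : ℝ) : S1) ((y' : ℝ) : S1) :=
      ⟨x₀, y, y', rfl, rfl, rfl, hx₀y, hlt, hy'I.2⟩
    obtain ⟨a, b, c, ha, hb, hc, hab, hbc, hca⟩ := hcop _ hx₀ _ hy _ hy' hcs
    have he : ((b0 ξ x₀ : ℝ) : S1) = (a : S1) := by rw [ha]; exact rep_coe 0 _
    obtain ⟨k, hk⟩ := s1_eq_iff.mp he  -- a = b0 + k
    have hbk : ((b - k : ℝ) : S1) = ξ ((y : ℝ) : S1) := by rw [s1_coe_sub_int]; exact hb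
    have hck : ((c - k : ℝ) : S1) = ξ ((y' : ℝ) : S1) := by rw [s1_coe_sub_int]; exact hc
    have hbm : b - (k : ℝ) ∈ Set.Ico (b0 ξ x₀) (b0 ξ x₀ + 1) := ⟨by linarith, by linarith⟩
    have hcm : c - (k : ℝ) ∈ Set.Ico (b0 ξ x₀) (b0 ξ x₀ + 1) := ⟨by linarith, by linarith⟩
    have e1 : rep (b0 ξ x₀) (ξ ((y : ℝ) : S1)) = b - k := by rw [← hbk]; exact rep_eq_of hbm
    have e2 : rep (b0 ξ x₀) (ξ ((y' : ℝ) : S1)) = c - k := by rw [← hck]; exact rep_eq_of hcm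
    rw [e1, e2]
    linarith

/-- full monotonicity of Xi on the preimage of F₁ -/
lemma Xi_monoOn {F₁ : Set S1} {ξ : S1 → S1} {x₀ : ℝ} (hx₀ : ((x₀ : ℝ) : S1) ∈ F₁)
    (hcop : COPOn ξ F₁) {y y' : ℝ} (hy : ((y : ℝ) : S1) ∈ F₁) (hy' : ((y' : ℝ) : S1) ∈ F₁)
    (hle : y ≤ y') : Xi ξ x₀ y ≤ Xi ξ x₀ y' := by
  set n : ℤ := ⌊y - x₀⌋ with hn
  set n' : ℤ := ⌊y' - x₀⌋ with hn'
  have hnn' : n ≤ n' := Int.floor_le_floor (by linarith)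
  have hyn : y - n ∈ Set.Ico x₀ (x₀ + 1) := by
    constructor
    · have := Int.floor_le (y - x₀); rw [← hn] at this; linarith
    · have := Int.lt_floor_add_one (y - x₀); rw [← hn] at this; linarith
  have hy'n : y' - n' ∈ Set.Ico x₀ (x₀ + 1) := by
    constructor
    · have := Int.floor_le (y' - x₀); rw [← hn'] at this; linarith
    · have := Int.lt_floor_add_one (y' - x₀); rw [← hn'] at this; linarith
  have hcoe : ((y - n : ℝ) : S1) = ((y : ℝ) : S1) := s1_coe_sub_int y n
  have hcoe' : ((y' - n' : ℝ) : S1) = ((y' : ℝ) : S1) := s1_coe_sub_int y' n'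
  have hyF : ((y - n : ℝ) : S1) ∈ F₁ := by rw [hcoe]; exact hy
  have hy'F : ((y' - n' : ℝ) : S1) ∈ F₁ := by rw [hcoe']; exact hy'
  rcases eq_or_lt_of_le hnn' with heq | hlt
  · have := Xi_mono_Ico hx₀ hcop hyF hy'F hyn (heq ▸ hy'n) (by
      have : (n : ℝ) = (n' : ℝ) := by exact_mod_cast heq
      linarith)
    unfold Xi
    rw [hcoe, hcoe'] at this
    rw [← hn, ← hn', ← heq]
    linarith
  · have h1 : rep (b0 ξ x₀) (ξ ((y : ℝ) : S1)) < b0 ξ x₀ + 1 := (rep_mem _ _).2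
    have h2 : b0 ξ x₀ ≤ rep (b0 ξ x₀) (ξ ((y' : ℝ) : S1)) := (rep_mem _ _).1
    have h3 : (n : ℝ) + 1 ≤ (n' : ℝ) := by exact_mod_cast hlt
    unfold Xi
    rw [← hn, ← hn']
    linarith


lemma D_const (φ₁ φ₂ : RGp G) (F₁ : Set S1) (ξ : S1 → S1) (x₀ : ℝ)
    (hx₀ : ((x₀ : ℝ) : S1) ∈ F₁)
    (hinv₁ : ∀ g, ∀ x ∈ F₁, φ₁.toFun g x ∈ F₁)
    (hcop : COPOn ξ F₁) (hinj : Set.InjOn ξ F₁)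
    (heqv : ∀ g, ∀ x ∈ F₁, ξ (φ₁.toFun g x) = φ₂.toFun g (ξ x)) (g : G) :
    (∀ y : ℝ, ((y : ℝ) : S1) ∈ F₁ →
      ∃ k : ℤ, Xi ξ x₀ (lft φ₁ g y) - lft φ₂ g (Xi ξ x₀ y) = k) ∧
    (∀ y y' : ℝ, ((y : ℝ) : S1) ∈ F₁ → ((y' : ℝ) : S1) ∈ F₁ →
      Xi ξ x₀ (lft φ₁ g y) - lft φ₂ g (Xi ξ x₀ y)
        = Xi ξ x₀ (lft φ₁ g y') - lft φ₂ g (Xi ξ x₀ y')) := by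
  set D : ℝ → ℝ := fun y => Xi ξ x₀ (lft φ₁ g y) - lft φ₂ g (Xi ξ x₀ y) with hD
  have hD_int : ∀ y : ℝ, ((y : ℝ) : S1) ∈ F₁ → ∃ k : ℤ, D y = k := by
    intro y hy
    have h1 : ((Xi ξ x₀ (lft φ₁ g y) : ℝ) : S1) = ((lft φ₂ g (Xi ξ x₀ y) : ℝ) : S1) := by
      rw [Xi_coe, lft_coe, lft_coe, Xi_coe]
      exact heqv g _ hy
    obtain ⟨k, hk⟩ := s1_eq_iff.mp h1
    refine ⟨-k, ?_⟩
    simp only [hD]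
    push_cast
    linarith
  have hD_per : ∀ (y : ℝ) (k : ℤ), D (y + k) = D y := by
    intro y k
    simp only [hD]
    rw [lft_add_int, Xi_add_int, Xi_add_int, lft_add_int]
    ring
  have hmemadd : ∀ y : ℝ, ((y : ℝ) : S1) ∈ F₁ → ((y + 1 : ℝ) : S1) ∈ F₁ := by
    intro y hy
    have h : ((y + 1 : ℝ) : S1) = ((y : ℝ) : S1) := by
      have := s1_coe_add_int y 1
      simpa using this
    rw [h]; exact hy
  have step : ∀ y y' : ℝ, ((y : ℝ) : S1) ∈ F₁ → ((y' : ℝ) : S1) ∈ F₁ →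
      y < y' → y' ≤ y + 1 → D y' = D y := by
    intro y y' hy hy' hlt hle
    have hy1 : ((y + 1 : ℝ) : S1) ∈ F₁ := hmemadd y hy
    have hfy : ((lft φ₁ g y : ℝ) : S1) ∈ F₁ := by rw [lft_coe]; exact hinv₁ g _ hy
    have hfy' : ((lft φ₁ g y' : ℝ) : S1) ∈ F₁ := by rw [lft_coe]; exact hinv₁ g _ hy'
    have hfy1 : ((lft φ₁ g (y + 1) : ℝ) : S1) ∈ F₁ := by rw [lft_coe]; exact hinv₁ g _ hy1
    have hA1 : Xi ξ x₀ (lft φ₁ g y) ≤ Xi ξ x₀ (lft φ₁ g y') :=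
      Xi_monoOn hx₀ hcop hfy hfy' ((lft_smono φ₁ g).monotone hlt.le)
    have hA2 : Xi ξ x₀ (lft φ₁ g y') ≤ Xi ξ x₀ (lft φ₁ g y) + 1 := by
      have h1 : lft φ₁ g y' ≤ lft φ₁ g (y + 1) := (lft_smono φ₁ g).monotone hle
      have h2 := Xi_monoOn hx₀ hcop hfy' hfy1 h1
      rwa [lft_add_one, Xi_add_one] at h2
    have hB1 : Xi ξ x₀ y ≤ Xi ξ x₀ y' := Xi_monoOn hx₀ hcop hy hy' hlt.le
    have hB2 : Xi ξ x₀ y' ≤ Xi ξ x₀ y + 1 := by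
      have h2 := Xi_monoOn hx₀ hcop hy' hy1 hle
      rwa [Xi_add_one] at h2
    have hL1 : lft φ₂ g (Xi ξ x₀ y) ≤ lft φ₂ g (Xi ξ x₀ y') := (lft_smono φ₂ g).monotone hB1
    have hL2 : lft φ₂ g (Xi ξ x₀ y') ≤ lft φ₂ g (Xi ξ x₀ y) + 1 := by
      have h2 := (lft_smono φ₂ g).monotone hB2
      rwa [lft_add_one] at h2
    obtain ⟨m, hm⟩ := hD_int y hy
    obtain ⟨m', hm'⟩ := hD_int y' hy'
    have hDy : D y = Xi ξ x₀ (lft φ₁ g y) - lft φ₂ g (Xi ξ x₀ y) := rfl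
    have hDy' : D y' = Xi ξ x₀ (lft φ₁ g y') - lft φ₂ g (Xi ξ x₀ y') := rfl
    have hb1 : (m' : ℝ) - m ≤ 1 := by rw [← hm, ← hm']; rw [hDy, hDy']; linarith
    have hb2 : (-1 : ℝ) ≤ (m' : ℝ) - m := by rw [← hm, ← hm']; rw [hDy, hDy']; linarith
    have hz1 : m' - m ≤ 1 := by exact_mod_cast (by push_cast; linarith : ((m' - m : ℤ) : ℝ) ≤ 1)
    have hz2 : (-1 : ℤ) ≤ m' - m := by
      exact_mod_cast (by push_cast; linarith : ((-1 : ℤ) : ℝ) ≤ ((m' - m : ℤ) : ℝ))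
    have hcases : m' - m = -1 ∨ m' - m = 0 ∨ m' - m = 1 := by omega
    rcases hcases with hcase | hcase | hcase
    · -- ΔA = 0
      exfalso
      have hdiff : D y' - D y = -1 := by
        rw [hm, hm']
        have h1 : ((m' - m : ℤ) : ℝ) = -1 := by rw [hcase]; norm_num
        push_cast at h1
        linarith
      have hAeq : Xi ξ x₀ (lft φ₁ g y') = Xi ξ x₀ (lft φ₁ g y) := by
        apply le_antisymm _ hA1
        rw [hDy, hDy'] at hdiff
        linarith
      have e3 : ξ ((lft φ₁ g y' : ℝ) : S1) = ξ ((lft φ₁ g y : ℝ) : S1) := by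
        rw [← Xi_coe ξ x₀ (lft φ₁ g y'), ← Xi_coe ξ x₀ (lft φ₁ g y), hAeq]
      have e4 : ((lft φ₁ g y' : ℝ) : S1) = ((lft φ₁ g y : ℝ) : S1) := hinj hfy' hfy e3
      obtain ⟨k, hk⟩ := s1_eq_iff.mp e4
      have hk1 : (k : ℝ) < 0 := by
        have : lft φ₁ g y < lft φ₁ g y' := (lft_smono φ₁ g) hlt
        linarith
      have hk2 : (-1 : ℝ) ≤ (k : ℝ) := by
        have h1 : lft φ₁ g y' ≤ lft φ₁ g (y + 1) := (lft_smono φ₁ g).monotone hle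
        rw [lft_add_one] at h1
        linarith
      have hkm1 : k = -1 := by
        have a1 : (k : ℤ) < 0 := by exact_mod_cast hk1
        have a2 : (-1 : ℤ) ≤ k := by exact_mod_cast hk2
        omega
      have hyy : y' = y + 1 := by
        apply (lft_smono φ₁ g).injective
        rw [lft_add_one]
        rw [hkm1] at hk
        push_cast at hk
        linarith
      have : D y' = D y := by
        rw [hyy]
        have := hD_per y 1
        simpa using this
      rw [this] at hdiff; linarith
    · rw [hm, hm']
      have : m' = m := by omega
      rw [this]
    · exfalso
      have hdiff : D y' - D y = 1 := by
        rw [hm, hm']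
        have h1 : ((m' - m : ℤ) : ℝ) = 1 := by rw [hcase]; norm_num
        push_cast at h1
        linarith
      have hLeq : lft φ₂ g (Xi ξ x₀ y') = lft φ₂ g (Xi ξ x₀ y) := by
        apply le_antisymm _ hL1
        rw [hDy, hDy'] at hdiff
        linarith
      have e2 : Xi ξ x₀ y' = Xi ξ x₀ y := (lft_smono φ₂ g).injective hLeq
      have e3 : ξ ((y' : ℝ) : S1) = ξ ((y : ℝ) : S1) := by
        rw [← Xi_coe ξ x₀ y', ← Xi_coe ξ x₀ y, e2]
      have e4 : ((y' : ℝ) : S1) = ((y : ℝ) : S1) := hinj hy' hy e3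
      obtain ⟨k, hk⟩ := s1_eq_iff.mp e4
      have hkm1 : k = -1 := by
        have a1 : (k : ℤ) < 0 := by exact_mod_cast (by linarith : (k : ℝ) < 0)
        have a2 : (-1 : ℤ) ≤ k := by exact_mod_cast (by linarith : (-1 : ℝ) ≤ (k : ℝ))
        omega
      have hyy : y' = y + 1 := by
        rw [hkm1] at hk
        push_cast at hk
        linarith
      have : D y' = D y := by
        rw [hyy]
        have := hD_per y 1
        simpa using this
      rw [this] at hdiff; linarith
  have key : ∀ u v : ℝ, ((u : ℝ) : S1) ∈ F₁ → ((v : ℝ) : S1) ∈ F₁ → u ≤ v → D u = D v := by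
    intro u v hu hv huv
    rcases eq_or_lt_of_le huv with rfl | hlt
    · rfl
    have h1 : u < v - (⌈v - u - 1⌉ : ℤ) := by
      have := Int.ceil_lt_add_one (v - u - 1)
      linarith
    have h2 : v - (⌈v - u - 1⌉ : ℤ) ≤ u + 1 := by
      have := Int.le_ceil (v - u - 1)
      linarith
    have hmem : ((v - (⌈v - u - 1⌉ : ℤ) : ℝ) : S1) ∈ F₁ := by
      rw [s1_coe_sub_int]; exact hv
    have hstp := step u (v - (⌈v - u - 1⌉ : ℤ)) hu hmem h1 h2
    have h3 : D (v - (⌈v - u - 1⌉ : ℤ) + (⌈v - u - 1⌉ : ℤ)) = D (v - (⌈v - u - 1⌉ : ℤ)) :=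
      hD_per _ _
    rw [sub_add_cancel] at h3
    exact hstp.symm.trans h3.symm
  refine ⟨hD_int, fun y y' hy hy' => ?_⟩
  rcases le_total y y' with h | h
  · exact key y y' hy hy' h
  · exact (key y' y hy' hy h).symm

lemma exists_semiconj_map (φ₁ φ₂ : RGp G) (F₁ F₂ : Set S1) (hne : F₁.Nonempty)
    (hinv₁ : ∀ g, ∀ x ∈ F₁, φ₁.toFun g x ∈ F₁)
    (ξ : S1 → S1) (hbij : Set.BijOn ξ F₁ F₂) (hcop : COPOn ξ F₁)
    (heqv : ∀ g, ∀ x ∈ F₁, ξ (φ₁.toFun g x) = φ₂.toFun g (ξ x)) :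
    ∃ h : S1 → S1, DegOneMonotone h ∧ ∀ g x, φ₂.toFun g (h x) = h (φ₁.toFun g x) := by
  obtain ⟨s₀, hs₀⟩ := hne
  obtain ⟨x₀, rfl⟩ := QuotientAddGroup.mk_surjective s₀
  -- hs₀ : ((x₀ : ℝ) : S1) ∈ F₁
  set S : ℝ → Set ℝ := fun x => {y : ℝ | ((y : ℝ) : S1) ∈ F₁ ∧ y ≤ x} with hSdef
  have hS_mem : ∀ x : ℝ, ∀ y ∈ S x, ((y : ℝ) : S1) ∈ F₁ ∧ y ≤ x := fun x y hy => hy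
  have hS_ne : ∀ x : ℝ, (Xi ξ x₀ '' S x).Nonempty := by
    intro x
    refine ⟨Xi ξ x₀ (x₀ - (⌈x₀ - x⌉ : ℤ)), ⟨x₀ - (⌈x₀ - x⌉ : ℤ), ⟨?_, ?_⟩, rfl⟩⟩
    · rw [s1_coe_sub_int]; exact hs₀
    · have := Int.le_ceil (x₀ - x); linarith
  have hS_bdd : ∀ x : ℝ, BddAbove (Xi ξ x₀ '' S x) := by
    intro x
    refine ⟨Xi ξ x₀ x₀ + (⌈x - x₀⌉ : ℤ), ?_⟩
    rintro _ ⟨y, ⟨hyF, hyx⟩, rfl⟩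
    have h1 : y ≤ x₀ + (⌈x - x₀⌉ : ℤ) := by
      have := Int.le_ceil (x - x₀); linarith
    have h2 : ((x₀ + (⌈x - x₀⌉ : ℤ) : ℝ) : S1) ∈ F₁ := by
      rw [s1_coe_add_int]; exact hs₀
    have := Xi_monoOn hs₀ hcop hyF h2 h1
    rwa [Xi_add_int] at this
  set H : ℝ → ℝ := fun x => sSup (Xi ξ x₀ '' S x) with hHdef
  have hH_mono : Monotone H := by
    intro x x' hxx
    apply csSup_le_csSup (hS_bdd x') (hS_ne x)
    apply Set.image_mono
    rintro y ⟨h1, h2⟩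
    exact ⟨h1, le_trans h2 hxx⟩
  have hH_add1 : ∀ x, H (x + 1) = H x + 1 := by
    intro x
    have him : Xi ξ x₀ '' S (x + 1) = (fun w => w + 1) '' (Xi ξ x₀ '' S x) := by
      rw [Set.image_image]
      have hset : S (x + 1) = (fun y => y + 1) '' S x := by
        ext y
        constructor
        · rintro ⟨h1, h2⟩
          refine ⟨y - 1, ⟨?_, by linarith⟩, by ring⟩
          have : ((y - 1 : ℝ) : S1) = ((y : ℝ) : S1) := by
            have := s1_coe_sub_int y 1; simpa using this
          rw [this]; exact h1
        · rintro ⟨z, ⟨h1, h2⟩, rfl⟩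
          constructor
          · have : ((z + 1 : ℝ) : S1) = ((z : ℝ) : S1) := by
              have := s1_coe_add_int z 1; simpa using this
            show ((z + 1 : ℝ) : S1) ∈ F₁
            rw [this]; exact h1
          · show z + 1 ≤ x + 1
            linarith
      rw [hset, Set.image_image]
      apply Set.image_congr
      intro z _
      exact Xi_add_one ξ x₀ z
    rw [hHdef]
    simp only
    rw [him]
    have hmono : Monotone (fun w : ℝ => w + 1) := fun a b h => by simpa using h
    have hcont : ContinuousAt (fun w : ℝ => w + 1) (sSup (Xi ξ x₀ '' S x)) :=
      (continuous_id.add continuous_const).continuousAt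
    exact (Monotone.map_csSup_of_continuousAt hcont hmono (hS_ne x) (hS_bdd x)).symm
  have hH_addint : ∀ (x : ℝ) (k : ℤ), H (x + k) = H x + k := add_int_of_add_one hH_add1
  -- the constant c g
  have hDC := fun g => D_const φ₁ φ₂ F₁ ξ x₀ hs₀ hinv₁ hcop hbij.injOn heqv g
  set c : G → ℝ := fun g => Xi ξ x₀ (lft φ₁ g x₀) - lft φ₂ g (Xi ξ x₀ x₀) with hcdef
  have hc_int : ∀ g, ∃ k : ℤ, c g = k := fun g => (hDC g).1 x₀ hs₀
  have hc_all : ∀ g y, ((y : ℝ) : S1) ∈ F₁ →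
      Xi ξ x₀ (lft φ₁ g y) = lft φ₂ g (Xi ξ x₀ y) + c g := by
    intro g y hy
    have := (hDC g).2 y x₀ hy hs₀
    rw [hcdef]
    simp only
    linarith
  -- equivariance of H
  have hsemi : ∀ g x, H (lft φ₁ g x) = lft φ₂ g (H x) + c g := by
    intro g x
    have himg : S (lft φ₁ g x) = lft φ₁ g '' S x := by
      ext y
      constructor
      · rintro ⟨hyF, hyle⟩
        have hz₀F : ((lft φ₁ g⁻¹ y : ℝ) : S1) ∈ F₁ := by
          rw [lft_coe]; exact hinv₁ g⁻¹ _ hyF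
        have hcomp : ((lft φ₁ g (lft φ₁ g⁻¹ y) : ℝ) : S1) = ((y : ℝ) : S1) := by
          rw [lft_coe, lft_coe]
          exact RGp.apply_inv_apply φ₁ g ((y : ℝ) : S1)
        obtain ⟨k, hk⟩ := s1_eq_iff.mp hcomp
        -- y = lft φ₁ g (lft φ₁ g⁻¹ y) + k
        refine ⟨lft φ₁ g⁻¹ y + k, ⟨?_, ?_⟩, ?_⟩
        · rw [s1_coe_add_int]; exact hz₀F
        · have he : lft φ₁ g (lft φ₁ g⁻¹ y + k) = y := by rw [lft_add_int, ← hk]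
          have : lft φ₁ g (lft φ₁ g⁻¹ y + k) ≤ lft φ₁ g x := by rw [he]; exact hyle
          exact (lft_smono φ₁ g).le_iff_le.mp this
        · rw [lft_add_int, ← hk]
      · rintro ⟨z, ⟨hzF, hzx⟩, rfl⟩
        constructor
        · rw [lft_coe]; exact hinv₁ g _ hzF
        · exact (lft_smono φ₁ g).monotone hzx
    have him2 : Xi ξ x₀ '' S (lft φ₁ g x)
        = (fun w => lft φ₂ g w + c g) '' (Xi ξ x₀ '' S x) := by
      rw [himg, Set.image_image, Set.image_image]
      apply Set.image_congr
      intro z hz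
      exact hc_all g z (hS_mem x z hz).1
    rw [hHdef]
    simp only
    rw [him2]
    have hmono : Monotone (fun w : ℝ => lft φ₂ g w + c g) :=
      fun a b h => by simpa using (lft_smono φ₂ g).monotone h
    have hcont : ContinuousAt (fun w : ℝ => lft φ₂ g w + c g) (sSup (Xi ξ x₀ '' S x)) :=
      ((lft_cont φ₂ g).add continuous_const).continuousAt
    exact (Monotone.map_csSup_of_continuousAt hcont hmono (hS_ne x) (hS_bdd x)).symm
  -- the circle map
  set h : S1 → S1 := fun s => ((H (rep 0 s) : ℝ) : S1) with hhdef
  have hh : ∀ t : ℝ, ((H t : ℝ) : S1) = h ((t : ℝ) : S1) := by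
    intro t
    have h1 : ((rep 0 ((t : ℝ) : S1) : ℝ) : S1) = ((t : ℝ) : S1) := rep_coe _ _
    obtain ⟨k, hk⟩ := s1_eq_iff.mp h1.symm
    -- rep 0 (t : S1) = t + k
    rw [hhdef]
    simp only
    rw [hk, hH_addint, s1_coe_add_int]
  refine ⟨h, ⟨H, hH_mono, hH_add1, hh⟩, ?_⟩
  intro g x
  obtain ⟨t, rfl⟩ := QuotientAddGroup.mk_surjective x
  have e1 : h ((t : ℝ) : S1) = ((H t : ℝ) : S1) := (hh t).symm
  rw [e1]
  obtain ⟨k, hk⟩ := hc_int g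
  calc φ₂.toFun g ((H t : ℝ) : S1) = ((lft φ₂ g (H t) : ℝ) : S1) := (lft_coe φ₂ g (H t)).symm
    _ = ((H (lft φ₁ g t) - c g : ℝ) : S1) := by rw [hsemi g t]; ring_nf
    _ = ((H (lft φ₁ g t) : ℝ) : S1) := by rw [hk]; exact s1_coe_sub_int _ k
    _ = h ((lft φ₁ g t : ℝ) : S1) := hh _
    _ = h (φ₁.toFun g ((t : ℝ) : S1)) := by rw [lft_coe]

end SCP

open SCP in
/-- A cyclic-order-preserving equivariant bijection between invariant
sets yields a semiconjugacy. -/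
theorem semiconj_of_equivariant_bijection (G : Type) [Group G] (φ₁ φ₂ : RGp G)
    (F₁ F₂ : Set S1) (hne : F₁.Nonempty)
    (hinv₁ : ∀ g, ∀ x ∈ F₁, φ₁.toFun g x ∈ F₁)
    (hinv₂ : ∀ g, ∀ x ∈ F₂, φ₂.toFun g x ∈ F₂)
    (ξ : S1 → S1) (hbij : Set.BijOn ξ F₁ F₂) (hcop : COPOn ξ F₁)
    (heqv : ∀ g, ∀ x ∈ F₁, ξ (φ₁.toFun g x) = φ₂.toFun g (ξ x)) :
    Semiconj φ₁ φ₂ := by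
  classical
  obtain ⟨x₁, hx₁⟩ := hne
  have hne₂ : F₂.Nonempty := ⟨ξ x₁, hbij.mapsTo hx₁⟩
  set ξ' : S1 → S1 := Function.invFunOn ξ F₁ with hξ'def
  have hinvon : Set.InvOn ξ' ξ F₁ F₂ := hbij.invOn_invFunOn
  have hbij2 : Set.BijOn ξ' F₂ F₁ := Set.BijOn.symm hinvon.symm hbij
  have hcop' : COPOn ξ' F₂ := by
    intro u hu v hv w hw hcs
    have hmu : ξ' u ∈ F₁ := hbij2.mapsTo hu
    have hmv : ξ' v ∈ F₁ := hbij2.mapsTo hv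
    have hmw : ξ' w ∈ F₁ := hbij2.mapsTo hw
    have hξu : ξ (ξ' u) = u := hinvon.2 hu
    have hξv : ξ (ξ' v) = v := hinvon.2 hv
    have hξw : ξ (ξ' w) = w := hinvon.2 hw
    obtain ⟨h1, h2, h3⟩ := csbtw_ne hcs
    have n1 : ξ' u ≠ ξ' v := fun e => h1 (by rw [← hξu, ← hξv, e])
    have n2 : ξ' v ≠ ξ' w := fun e => h2 (by rw [← hξv, ← hξw, e])
    have n3 : ξ' u ≠ ξ' w := fun e => h3 (by rw [← hξu, ← hξw, e])
    rcases csbtw_total n1 n2 n3 with h | h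
    · exact h
    · exfalso
      have := hcop _ hmu _ hmw _ hmv h
      rw [hξu, hξv, hξw] at this
      exact csbtw_asymm hcs this
  have heqv' : ∀ g, ∀ x ∈ F₂, ξ' (φ₂.toFun g x) = φ₁.toFun g (ξ' x) := by
    intro g u hu
    have hx : ξ' u ∈ F₁ := hbij2.mapsTo hu
    have hmem : φ₁.toFun g (ξ' u) ∈ F₁ := hinv₁ g _ hx
    have key : ξ (φ₁.toFun g (ξ' u)) = φ₂.toFun g u := by
      rw [heqv g _ hx, hinvon.2 hu]
    rw [← key]
    exact hinvon.1 hmem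
  obtain ⟨h, hdom, hsemi⟩ :=
    exists_semiconj_map φ₁ φ₂ F₁ F₂ ⟨x₁, hx₁⟩ hinv₁ ξ hbij hcop heqv
  obtain ⟨h', hdom', hsemi'⟩ :=
    exists_semiconj_map φ₂ φ₁ F₂ F₁ hne₂ hinv₂ ξ' hbij2 hcop' heqv'
  by_cases hfix : HasGlobalFix φ₁
  · left
    refine ⟨hfix, ?_⟩
    obtain ⟨x, hx⟩ := hfix
    exact ⟨h x, fun g => by rw [hsemi g x, hx]⟩
  · right
    refine ⟨hfix, fun hfix₂ => hfix ?_, h, hdom, hsemi⟩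
    obtain ⟨y, hy⟩ := hfix₂
    exact ⟨h' y, fun g => by rw [hsemi' g y, hy]⟩
end
end

section
/- For any group G, the set R_G(0) of homomorphisms φ ∈ R_G admitting a φ(G)-invariant Borel probability measure on S¹ is a closed subset of R_G in the weak topology. -/
noncomputable section

/-- The uniform distance between two homeomorphisms of the circle. -/
def circleDist (f h : S1 ≃ₜ S1) : ℝ := ⨆ x : S1, dist (f x) (h x)

/-- The weak topology on `R_G`, generated by the sets `U(φ; g, ε)`. -/
instance weakTopology (G : Type) [Group G] : TopologicalSpace (RGp G) :=
  .generateFrom {U | ∃ (ψ : RGp G) (g : G) (ε : ℝ), 0 < ε ∧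
    U = {χ : RGp G | circleDist (χ.toFun g) (ψ.toFun g) < ε}}

instance : Fact ((0:ℝ) < 1) := ⟨one_pos⟩

/-- Type 0: there is an invariant Borel probability measure on the circle. -/
def IsType0 {G : Type} [Group G] (φ : RGp G) : Prop :=
  ∃ μ : MeasureTheory.Measure S1, MeasureTheory.IsProbabilityMeasure μ ∧
    ∀ g, MeasureTheory.Measure.map (φ.toFun g) μ = μ

open MeasureTheory Set Filter Topology Function

/-! ### Auxiliary material: representatives and arcs on the circle. -/

/-- The representative of a point of the circle in `(a, a+1]`. -/
noncomputable def repA (a : ℝ) (y : S1) : ℝ := (AddCircle.measurableEquivIoc 1 a y : ℝ)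

lemma repA_mem (a : ℝ) (y : S1) : repA a y ∈ Ioc a (a+1) := (AddCircle.measurableEquivIoc 1 a y).2

lemma measurable_repA (a : ℝ) : Measurable (repA a) :=
  measurable_subtype_coe.comp (AddCircle.measurableEquivIoc 1 a).measurable

lemma coe_repA (a : ℝ) (y : S1) : ((repA a y : ℝ) : S1) = y := by
  have : ((AddCircle.equivIoc 1 a).symm (AddCircle.equivIoc 1 a y)) = y :=
    Equiv.symm_apply_apply _ _
  exact this

lemma repA_coe (a : ℝ) {t : ℝ} (ht : t ∈ Ioc a (a+1)) : repA a ((t : ℝ) : S1) = t := by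
  have : (AddCircle.equivIoc 1 a) ((t : ℝ) : S1) = ⟨t, ht⟩ := by
    rw [Equiv.apply_eq_iff_eq_symm_apply]; rfl
  simp [repA, AddCircle.measurableEquivIoc, this]
  exact congrArg Subtype.val this

lemma coe_eq_coe {s t : ℝ} : ((s:ℝ) : S1) = (t : S1) ↔ ∃ n : ℤ, t = s + n := by
  rw [QuotientAddGroup.eq]
  constructor
  · rintro h
    rw [AddSubgroup.mem_zmultiples_iff] at h
    obtain ⟨k, hk⟩ := h
    exact ⟨k, by simp only [zsmul_eq_mul, mul_one] at hk; linarith⟩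
  · rintro ⟨n, rfl⟩
    rw [AddSubgroup.mem_zmultiples_iff]
    exact ⟨n, by simp [zsmul_eq_mul]⟩

lemma measurable_coeS1 : Measurable (fun t : ℝ => (t : S1)) := AddCircle.measurable_mk'

/-- The arc `(p, r]` on the circle. -/
def arc (p r : ℝ) : Set S1 := (fun t : ℝ => (t : S1)) '' Ioc p r

lemma arc_eq_preimage (p r : ℝ) : arc p r = repA p ⁻¹' (Iic r) := by
  ext y
  simp only [arc, mem_image, mem_preimage, mem_Iic]
  constructor
  · rintro ⟨s, hs, rfl⟩
    rcases le_or_gt r (p+1) with hr | hr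
    · rw [repA_coe p ⟨hs.1, hs.2.trans hr⟩]; exact hs.2
    · rcases le_or_gt s (p+1) with hs1 | hs1
      · rw [repA_coe p ⟨hs.1, hs1⟩]; exact hs.2
      · exact le_trans (repA_mem p _).2 (by linarith)
  · intro h
    exact ⟨repA p y, ⟨(repA_mem p y).1, h⟩, coe_repA p y⟩

lemma measurableSet_arc (p r : ℝ) : MeasurableSet (arc p r) := by
  rw [arc_eq_preimage]; exact measurable_repA p measurableSet_Iic

lemma arc_empty {p r : ℝ} (h : r ≤ p) : arc p r = ∅ := by
  simp [arc, Ioc_eq_empty (not_lt.mpr h)]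

lemma arc_univ {p r : ℝ} (h : p + 1 ≤ r) : arc p r = univ := by
  rw [arc_eq_preimage]
  ext y; simp only [mem_preimage, mem_Iic, mem_univ, iff_true]
  exact le_trans (repA_mem p y).2 h

lemma coe_add_int (t : ℝ) (n : ℤ) : ((t + n : ℝ) : S1) = (t : S1) := by
  symm; rw [coe_eq_coe]; exact ⟨n, rfl⟩

lemma arc_add_int (p r : ℝ) (n : ℤ) : arc (p + n) (r + n) = arc p r := by
  unfold arc
  ext y
  simp only [mem_image]
  constructor
  · rintro ⟨s, hs, rfl⟩
    exact ⟨s - n, by constructor <;> [skip; skip] <;>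
      first
        | (rw [mem_Ioc]; constructor <;> [linarith [hs.1]; linarith [hs.2]])
        | (rw [show ((s - n : ℝ) : S1) = ((s - n) + n : ℝ) from (coe_add_int _ n).symm]; norm_num)⟩
  · rintro ⟨s, hs, rfl⟩
    exact ⟨s + n, ⟨by linarith [hs.1], by linarith [hs.2]⟩, coe_add_int s n⟩

lemma arc_mem_iff {p r : ℝ} (hr : r ≤ p + 1) {y : S1} :
    y ∈ arc p r ↔ repA p y ∈ Ioc p r := by
  rw [arc_eq_preimage]
  exact ⟨fun h => ⟨(repA_mem p y).1, h⟩, fun h => h.2⟩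

lemma arc_diff {a p r : ℝ} (hap : a ≤ p) (hpr : p ≤ r) (hr : r ≤ a + 1) :
    arc p r = arc a r \ arc a p := by
  ext y
  rw [arc_eq_preimage a, arc_eq_preimage a]
  simp only [mem_diff, mem_preimage, mem_Iic, not_le]
  constructor
  · rintro h
    rw [arc_mem_iff (by linarith)] at h
    have h2 : repA p y ∈ Ioc a (a+1) := ⟨lt_of_le_of_lt hap h.1, (le_trans h.2 hr)⟩
    have : repA a y = repA p y := by
      conv_lhs => rw [← coe_repA p y]
      exact repA_coe a h2
    rw [this]
    exact ⟨h.2, h.1⟩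
  · rintro ⟨h1, h2⟩
    have h3 : repA a y ∈ Ioc p r := ⟨h2, h1⟩
    rw [arc_mem_iff (by linarith)]
    have : repA p y = repA a y := by
      conv_lhs => rw [← coe_repA a y]
      exact repA_coe p ⟨h3.1, by linarith [(repA_mem a y).2]⟩
    rw [this]; exact h3

lemma arc_mono (p : ℝ) {r r' : ℝ} (h : r ≤ r') : arc p r ⊆ arc p r' := by
  rw [arc_eq_preimage, arc_eq_preimage]; exact fun y hy => le_trans hy h

/-! ### The periodized CDF of a measure on the circle. -/

/-- Periodized CDF of a measure on the circle, anchored at `0`. -/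
noncomputable def WW (m : Measure S1) (t : ℝ) : ℝ :=
  ((⌈t⌉ : ℝ) - 1) + (m (arc 0 (t - ⌈t⌉ + 1))).toReal

lemma ceil_interval {t : ℝ} (ht : t ∈ Ioc (0:ℝ) 1) : (⌈t⌉ : ℤ) = 1 := by
  have h1 : (1:ℤ) ≤ ⌈t⌉ := by exact_mod_cast Int.le_ceil_iff.mpr (by simpa using ht.1)
  have h2 : ⌈t⌉ ≤ 1 := Int.ceil_le.mpr (by simpa using ht.2)
  omega

section WWsec
variable (m : Measure S1) [IsProbabilityMeasure m]

lemma WW_of_mem {t : ℝ} (ht : t ∈ Ioc (0:ℝ) 1) : WW m t = (m (arc 0 t)).toReal := by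
  unfold WW
  rw [ceil_interval ht]
  push_cast
  norm_num

lemma WW_toReal_le_one : ∀ s, (m (arc 0 s)).toReal ≤ 1 := by
  intro s
  have h := prob_le_one (μ := m) (s := arc 0 s)
  calc (m (arc 0 s)).toReal ≤ (1 : ENNReal).toReal := ENNReal.toReal_mono (by norm_num) h
  _ = 1 := by norm_num

lemma WW_mem (t : ℝ) : WW m t ∈ Icc ((⌈t⌉ : ℝ) - 1) (⌈t⌉ : ℝ) := by
  unfold WW
  constructor
  · nlinarith [ENNReal.toReal_nonneg (a := m (arc 0 (t - ⌈t⌉ + 1)))]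
  · nlinarith [WW_toReal_le_one m (t - ⌈t⌉ + 1)]

lemma WW_add_int (t : ℝ) (n : ℤ) : WW m (t + n) = WW m t + n := by
  unfold WW
  rw [Int.ceil_add_intCast]
  have : t + (n:ℝ) - (⌈t⌉ + n) + 1 = t - ⌈t⌉ + 1 := by push_cast; ring
  push_cast
  rw [this]
  ring

lemma WW_mono : Monotone (WW m) := by
  intro s t hst
  rcases eq_or_lt_of_le (Int.ceil_le_ceil hst) with h | h
  · unfold WW
    rw [← h]
    have : arc 0 (s - ⌈s⌉ + 1) ⊆ arc 0 (t - ⌈s⌉ + 1) := arc_mono 0 (by linarith)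
    have h2 := measure_mono (μ := m) this
    have := ENNReal.toReal_mono (measure_ne_top m _) h2
    linarith
  · have h1 := (WW_mem m s).2
    have h2 := (WW_mem m t).1
    have h3 : ⌈s⌉ + 1 ≤ ⌈t⌉ := h
    have h4 : ((⌈s⌉ + 1 : ℤ) : ℝ) ≤ ((⌈t⌉ : ℤ) : ℝ) := by exact_mod_cast h3
    push_cast at h4
    linarith

lemma arcMass₀ {p r : ℝ} (hp : p ∈ Ioc (0:ℝ) 1) (hpr : p ≤ r) (hr : r ≤ p + 1) :
    (m (arc p r)).toReal = WW m r - WW m p := by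
  rcases le_or_gt r 1 with h1 | h1
  · rw [WW_of_mem m ⟨lt_of_lt_of_le hp.1 hpr, h1⟩, WW_of_mem m hp]
    rw [arc_diff (le_of_lt hp.1) hpr (by linarith)]
    rw [measure_diff (arc_mono 0 hpr) (measurableSet_arc 0 p).nullMeasurableSet
      (measure_ne_top m _)]
    exact ENNReal.toReal_sub_of_le (measure_mono (arc_mono 0 hpr)) (measure_ne_top m _)
  · have hr1 : r - 1 ≤ p := by linarith
    have hsplit : arc p r = (univ \ arc 0 p) ∪ arc 0 (r - 1) := by
      have e1 : Ioc p r = Ioc p 1 ∪ Ioc 1 r := (Ioc_union_Ioc_eq_Ioc hp.2 (le_of_lt h1)).symm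
      have e2 : arc p r = arc p 1 ∪ arc 1 r := by
        unfold arc; rw [e1, image_union]
      have e3 : arc p 1 = univ \ arc 0 p := by
        rw [arc_diff (le_of_lt hp.1) hp.2 (by norm_num), arc_univ (by norm_num)]
      have e4 : arc 1 r = arc 0 (r-1) := by
        have h := arc_add_int 0 (r-1) 1
        have : arc (0 + (1:ℤ)) ((r-1) + (1:ℤ)) = arc 1 r := by norm_num
        rw [← this, h]
      rw [e2, e3, e4]
    have hdisj : Disjoint (univ \ arc 0 p) (arc 0 (r-1)) :=
      Set.disjoint_of_subset_right (arc_mono 0 hr1) (disjoint_sdiff_self_left)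
    rw [hsplit, measure_union hdisj (measurableSet_arc 0 (r-1)),
      measure_diff (subset_univ _) (measurableSet_arc 0 p).nullMeasurableSet (measure_ne_top m _)]
    have hmuniv : m univ = 1 := measure_univ
    have hceil : (⌈r⌉ : ℤ) = 2 := by
      have ha : (2:ℤ) ≤ ⌈r⌉ := by
        rw [Int.le_ceil_iff]; push_cast; linarith
      have hb : ⌈r⌉ ≤ 2 := Int.ceil_le.mpr (by push_cast; linarith [hp.2])
      omega
    have hWr : WW m r = 1 + (m (arc 0 (r-1))).toReal := by
      unfold WW; rw [hceil]; push_cast; ring_nf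
    have hWp : WW m p = (m (arc 0 p)).toReal := WW_of_mem m hp
    rw [hWr, hWp]
    rw [ENNReal.toReal_add (by
        exact ne_of_lt (lt_of_le_of_lt (tsub_le_self) (lt_of_le_of_lt (le_of_eq hmuniv) (by norm_num))))
      (measure_ne_top m _)]
    rw [ENNReal.toReal_sub_of_le (measure_mono (subset_univ _)) (measure_ne_top m _), hmuniv]
    norm_num
    ring

lemma arcMass {p r : ℝ} (hpr : p ≤ r) (hr : r ≤ p + 1) :
    (m (arc p r)).toReal = WW m r - WW m p := by
  set n : ℤ := 1 - ⌈p⌉ with hn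
  have hp' : p + n ∈ Ioc (0:ℝ) 1 := by
    constructor
    · push_cast [hn]; linarith [Int.ceil_lt_add_one p]
    · push_cast [hn]; linarith [Int.le_ceil p]
  have harc : arc (p + n) (r + n) = arc p r := arc_add_int p r n
  have := arcMass₀ m hp' (by linarith [hp'.1, hp'.2] : p + (n:ℝ) ≤ r + (n:ℝ))
    (by linarith : r + (n:ℝ) ≤ (p + (n:ℝ)) + 1)
  rw [harc] at this
  rw [this, WW_add_int m r n, WW_add_int m p n]
  ring

end WWsec

/-! ### Thickening of arcs. -/

lemma mem_arc_of_dist_lt {p r δ : ℝ} {z w : S1}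
    (hdist : dist z w < δ) (hw : w ∈ arc p r) : z ∈ arc (p - δ) (r + δ) := by
  obtain ⟨t, ht, rfl⟩ := hw
  obtain ⟨v0, hv0⟩ : ∃ v0 : ℝ, (v0 : S1) = z - (t:S1) :=
    Quotient.exists_rep (z - (t:S1)) |>.imp fun v h => h
  set v : ℝ := v0 - round v0 with hv
  have hvz : (v : S1) = z - (t:S1) := by
    rw [← hv0, hv, show v0 - (round v0 : ℝ) = v0 + (-round v0 : ℤ) by push_cast; ring,
      coe_add_int]
  have hround : round v = 0 := by
    rw [hv, round_sub_intCast, sub_self]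
  have hnorm : |v| = ‖z - (t:S1)‖ := by
    rw [← hvz, AddCircle.norm_eq]
    simp [hround]
  have hlt : |v| < δ := by
    rw [hnorm]
    calc ‖z - (t:S1)‖ = dist z (t:S1) := (dist_eq_norm _ _).symm
    _ < δ := hdist
  have hz : z = ((t + v : ℝ) : S1) := by
    have h2 : z = (v:S1) + (t:S1) := sub_eq_iff_eq_add.mp hvz.symm
    rw [h2, AddCircle.coe_add]; abel
  exact ⟨t + v, ⟨by cases abs_lt.mp hlt; linarith [ht.1],
    by cases abs_lt.mp hlt; linarith [ht.2]⟩, hz.symm⟩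

/-! ### The circle measure associated with a periodic Stieltjes function. -/

section Stieltjes
variable (F : StieltjesFunction ℝ) (hper : ∀ x, F (x + 1) = F x + 1)

include hper in
lemma Fper_int : ∀ (x : ℝ) (n : ℤ), F (x + n) = F x + n := by
  intro x n
  induction n using Int.induction_on with
  | zero => simp
  | succ k ih =>
      push_cast at ih ⊢
      rw [show x + ((k:ℝ) + 1) = (x + k) + 1 by ring, hper]
      linarith
  | pred k ih =>
      push_cast at ih ⊢
      rw [show x + -(k:ℝ) = x - k by ring] at ih
      have := hper (x - (k:ℝ) - 1)
      rw [show x - (k:ℝ) - 1 + 1 = x - k by ring] at this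
      rw [show x + (-(k:ℝ) - 1) = x - k - 1 by ring]
      linarith

lemma preimage_arc (p r : ℝ) :
    (fun t : ℝ => (t : S1)) ⁻¹' arc p r = ⋃ n : ℤ, Ioc (p + n) (r + n) := by
  ext t
  simp only [mem_preimage, arc, mem_image, mem_iUnion, mem_Ioc]
  constructor
  · rintro ⟨s, hs, hst⟩
    obtain ⟨n, rfl⟩ := coe_eq_coe.mp hst
    exact ⟨n, by constructor <;> [linarith [hs.1]; linarith [hs.2]]⟩
  · rintro ⟨n, hn⟩
    exact ⟨t - n, ⟨by linarith [hn.1], by linarith [hn.2]⟩, by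
      rw [coe_eq_coe]; exact ⟨n, by ring⟩⟩

/-- The probability measure on the circle induced by a periodic Stieltjes function. -/
noncomputable def circMeasure : Measure S1 :=
  (F.measure.restrict (Ioc 0 1)).map (fun t : ℝ => (t : S1))

lemma circMeasure_apply (S : Set S1) (hS : MeasurableSet S) :
    circMeasure F S = F.measure ((fun t : ℝ => (t : S1)) ⁻¹' S ∩ Ioc 0 1) := by
  unfold circMeasure
  rw [Measure.map_apply measurable_coeS1 hS, Measure.restrict_apply (measurable_coeS1 hS)]

include hper in
lemma circMeasure_arc₀ {p r : ℝ} (hp : p ∈ Ioc (0:ℝ) 1) (hpr : p ≤ r) (hr : r ≤ p + 1) :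
    circMeasure F (arc p r) = ENNReal.ofReal (F r - F p) := by
  rw [circMeasure_apply F _ (measurableSet_arc p r), preimage_arc]
  rcases le_or_gt r 1 with h1 | h1
  · have hset : (⋃ n : ℤ, Ioc (p + n) (r + n)) ∩ Ioc 0 1 = Ioc p r := by
      ext t
      simp only [mem_inter_iff, mem_iUnion, mem_Ioc]
      constructor
      · rintro ⟨⟨n, hn1, hn2⟩, ht1, ht2⟩
        have hn0 : n = 0 := by
          have a1 : (n:ℝ) < 1 := by linarith [hp.1]
          have a2 : (-1:ℝ) < n := by linarith
          have b1 : n < 1 := by exact_mod_cast a1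
          have b2 : -1 < n := by exact_mod_cast a2
          omega
        subst hn0
        push_cast at hn1 hn2
        exact ⟨by linarith, by linarith⟩
      · rintro ⟨ht1, ht2⟩
        exact ⟨⟨0, by push_cast; constructor <;> linarith⟩, by constructor <;> linarith [hp.1]⟩
    rw [hset, F.measure_Ioc]
  · have hset : (⋃ n : ℤ, Ioc (p + n) (r + n)) ∩ Ioc 0 1 = Ioc p 1 ∪ Ioc 0 (r - 1) := by
      ext t
      simp only [mem_inter_iff, mem_iUnion, mem_Ioc, mem_union]
      constructor
      · rintro ⟨⟨n, hn1, hn2⟩, ht1, ht2⟩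
        have a1 : (n:ℝ) < 1 := by linarith [hp.1]
        have a2 : (-2:ℝ) < n := by linarith [hp.2]
        have b1 : n < 1 := by exact_mod_cast a1
        have b2 : -2 < n := by exact_mod_cast a2
        interval_cases n
        · right; push_cast at hn1 hn2; constructor <;> linarith
        · left; push_cast at hn1 hn2; constructor <;> linarith
      · rintro (⟨ht1, ht2⟩ | ⟨ht1, ht2⟩)
        · exact ⟨⟨0, by push_cast; constructor <;> linarith⟩, by constructor <;> linarith [hp.1]⟩
        · exact ⟨⟨-1, by push_cast; constructor <;> linarith [hp.2]⟩,
            by constructor <;> linarith [hp.2]⟩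
    rw [hset, measure_union ?hd measurableSet_Ioc, F.measure_Ioc, F.measure_Ioc]
    case hd =>
      rw [Set.disjoint_left]
      rintro t ⟨ht1, _⟩ ⟨_, ht2⟩
      linarith [hp.2]
    rw [← ENNReal.ofReal_add (by linarith [F.mono hp.2] : 0 ≤ F 1 - F p)
      (by linarith [F.mono (by linarith : (0:ℝ) ≤ r - 1)] : 0 ≤ F (r-1) - F 0)]
    congr 1
    have e1 : F 1 = F 0 + 1 := by simpa using hper 0
    have e2 : F r = F (r-1) + 1 := by
      have := hper (r-1); rw [sub_add_cancel] at this; exact this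
    linarith

include hper in
lemma circMeasure_arc {p r : ℝ} (hpr : p ≤ r) (hr : r ≤ p + 1) :
    circMeasure F (arc p r) = ENNReal.ofReal (F r - F p) := by
  set n : ℤ := 1 - ⌈p⌉ with hn
  have hp' : p + n ∈ Ioc (0:ℝ) 1 := by
    constructor
    · push_cast [hn]; linarith [Int.ceil_lt_add_one p]
    · push_cast [hn]; linarith [Int.le_ceil p]
  have harc : arc (p + n) (r + n) = arc p r := arc_add_int p r n
  have := circMeasure_arc₀ F hper hp' (by linarith [hp'.1, hp'.2] : p + (n:ℝ) ≤ r + (n:ℝ))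
    (by linarith : r + (n:ℝ) ≤ (p + (n:ℝ)) + 1)
  rw [harc] at this
  rw [this, Fper_int F hper r n, Fper_int F hper p n]
  ring_nf

include hper in
lemma circMeasure_prob : IsProbabilityMeasure (circMeasure F) := by
  constructor
  rw [circMeasure_apply F univ MeasurableSet.univ]
  have e1 : F 1 = F 0 + 1 := by simpa using hper 0
  simp only [preimage_univ, univ_inter, F.measure_Ioc]
  rw [show F 1 - F 0 = 1 by linarith]
  norm_num

end Stieltjes

/-! ### Limit utilities. -/

lemma exists_ulim {α : Type} (U : Ultrafilter α) (f : α → ℝ) (l u : ℝ)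
    (hf : ∀ a, f a ∈ Icc l u) : ∃ r ∈ Icc l u, Tendsto f U (𝓝 r) := by
  obtain ⟨r, hr, hle⟩ := (isCompact_Icc (a := l) (b := u)).ultrafilter_le_nhds (U.map f)
    (by rw [Filter.le_principal_iff, Ultrafilter.mem_coe, Ultrafilter.mem_map]
        exact Filter.univ_mem' hf)
  exact ⟨r, hr, hle⟩

lemma rightLim_per {f : ℝ → ℝ} (hf : Monotone f) (hp : ∀ x, f (x + 1) = f x + 1) (x : ℝ) :
    Function.rightLim f (x + 1) = Function.rightLim f x + 1 := by
  have h1 : Tendsto (fun y => y + (1:ℝ)) (𝓝[>] x) (𝓝[>] (x+1)) := by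
    apply tendsto_nhdsWithin_of_tendsto_nhds_of_eventually_within
    · exact ((continuous_id.add continuous_const).tendsto x).mono_left nhdsWithin_le_nhds
    · filter_upwards [eventually_mem_nhdsWithin] with y hy
      exact add_lt_add_left (show x < y from hy) 1
  have h2 : Tendsto (fun y => f (y + 1)) (𝓝[>] x) (𝓝 (Function.rightLim f (x+1))) :=
    (hf.tendsto_rightLim (x+1)).comp h1
  have h3 : Tendsto (fun y => f (y + 1)) (𝓝[>] x) (𝓝 (Function.rightLim f x + 1)) := by
    simp only [hp]
    exact (hf.tendsto_rightLim x).add_const 1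
  exact tendsto_nhds_unique h2 h3

lemma addOne_int {f : ℝ → ℝ} (hp : ∀ x, f (x + 1) = f x + 1) :
    ∀ (x : ℝ) (n : ℤ), f (x + n) = f x + n := by
  intro x n
  induction n using Int.induction_on with
  | zero => simp
  | succ k ih =>
      push_cast at ih ⊢
      rw [show x + ((k:ℝ) + 1) = (x + k) + 1 by ring, hp]
      linarith
  | pred k ih =>
      push_cast at ih ⊢
      rw [show x + -(k:ℝ) = x - k by ring] at ih
      have := hp (x - (k:ℝ) - 1)
      rw [show x - (k:ℝ) - 1 + 1 = x - k by ring] at this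
      rw [show x + (-(k:ℝ) - 1) = x - k - 1 by ring]
      linarith

lemma exists_cont_pt {f : ℝ → ℝ} (hf : Monotone f) {l u : ℝ} (h : l < u) :
    ∃ d ∈ Ioo l u, ContinuousAt f d := by
  by_contra hcon
  push_neg at hcon
  have hsub : Ioo l u ⊆ {t | ¬ContinuousAt f t} := fun t ht => hcon t ht
  have h0 : (volume : Measure ℝ) (Ioo l u) = 0 :=
    measure_mono_null hsub (hf.countable_not_continuousAt.measure_zero _)
  rw [Real.volume_Ioo] at h0
  simp only [ENNReal.ofReal_eq_zero] at h0
  linarith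

/-! ### `circleDist` utilities. -/

lemma dist_le_circleDist (f h : S1 ≃ₜ S1) (x : S1) : dist (f x) (h x) ≤ circleDist f h := by
  apply le_ciSup (f := fun x => dist (f x) (h x)) ?_ x
  exact (isCompact_range (f.continuous.dist h.continuous)).bddAbove

lemma circleDist_self (f : S1 ≃ₜ S1) : circleDist f f = 0 := by
  unfold circleDist
  simp only [dist_self]
  exact ciSup_const

lemma isOpen_ball {G : Type} [Group G] (φ : RGp G) (g : G) {ε : ℝ} (hε : 0 < ε) :
    IsOpen {χ : RGp G | circleDist (χ.toFun g) (φ.toFun g) < ε} :=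
  TopologicalSpace.GenerateOpen.basic _ ⟨φ, g, ε, hε, rfl⟩

lemma symm_image (f : S1 ≃ₜ S1) (S : Set S1) : ⇑f.symm '' S = ⇑f ⁻¹' S := by
  ext y
  constructor
  · rintro ⟨s, hs, rfl⟩
    simpa [f.apply_symm_apply] using hs
  · intro h
    exact ⟨f y, h, f.symm_apply_apply y⟩


/-- The set of type 0 homomorphisms is closed in the weak topology. -/
theorem type0_isClosed (G : Type) [Group G] :
    IsClosed {φ : RGp G | IsType0 φ} := by
  classical
  rw [← closure_subset_iff_isClosed]
  intro φ hφ
  have hclus : ClusterPt φ (𝓟 {ψ : RGp G | IsType0 ψ}) := mem_closure_iff_clusterPt.mp hφ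
  haveI hne : (𝓝 φ ⊓ 𝓟 {ψ : RGp G | IsType0 ψ}).NeBot := hclus
  set U : Ultrafilter (RGp G) := Ultrafilter.of (𝓝 φ ⊓ 𝓟 {ψ : RGp G | IsType0 ψ}) with hUdef
  have hUle : ↑U ≤ 𝓝 φ ⊓ 𝓟 {ψ : RGp G | IsType0 ψ} := Ultrafilter.of_le _
  have hUnhds : ↑U ≤ 𝓝 φ := hUle.trans inf_le_left
  have hUC : {ψ : RGp G | IsType0 ψ} ∈ U :=
    (hUle.trans inf_le_right) (mem_principal_self _)
  -- choice of invariant measures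
  let μof : RGp G → Measure S1 := fun ψ => if h : IsType0 ψ then h.choose else Measure.dirac 0
  have hprob : ∀ ψ, IsProbabilityMeasure (μof ψ) := by
    intro ψ; by_cases h : IsType0 ψ
    · simp only [μof, dif_pos h]; exact h.choose_spec.1
    · simp only [μof, dif_neg h]; infer_instance
  have hinv : ∀ ψ, IsType0 ψ → ∀ g, Measure.map (ψ.toFun g) (μof ψ) = μof ψ := by
    intro ψ h g; simp only [μof, dif_pos h]; exact h.choose_spec.2 g
  -- the limit CDF
  have hex : ∀ t : ℝ, ∃ r ∈ Icc ((⌈t⌉:ℝ) - 1) (⌈t⌉:ℝ),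
      Tendsto (fun ψ => WW (μof ψ) t) U (𝓝 r) := fun t =>
    exists_ulim U _ _ _ (fun ψ => by haveI := hprob ψ; exact WW_mem (μof ψ) t)
  set c : ℝ → ℝ := fun t => (hex t).choose with hcdef
  have htend : ∀ t, Tendsto (fun ψ => WW (μof ψ) t) U (𝓝 (c t)) := fun t => (hex t).choose_spec.2
  have hcmono : Monotone c := by
    intro s t hst
    exact le_of_tendsto_of_tendsto' (htend s) (htend t)
      (fun ψ => by haveI := hprob ψ; exact WW_mono (μof ψ) hst)
  have hcper : ∀ t, c (t + 1) = c t + 1 := by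
    intro t
    refine tendsto_nhds_unique (htend (t+1)) ?_
    have heq : (fun ψ => WW (μof ψ) (t+1)) = fun ψ => WW (μof ψ) t + 1 := by
      funext ψ; haveI := hprob ψ
      simpa using WW_add_int (μof ψ) t 1
    rw [heq]
    exact (htend t).add_const 1
  -- the Stieltjes function and limit measure
  set F : StieltjesFunction ℝ := hcmono.stieltjesFunction with hFdef
  have hFeq : ∀ t, F t = Function.rightLim c t := fun t => hcmono.stieltjesFunction_eq t
  have hFper : ∀ t, F (t + 1) = F t + 1 := by
    intro t; rw [hFeq, hFeq]; exact rightLim_per hcmono hcper t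
  haveI hμprob : IsProbabilityMeasure (circMeasure F) := circMeasure_prob F hFper
  -- anchor point: a continuity point of c
  obtain ⟨a, ha01, hca⟩ := exists_cont_pt hcmono (one_pos)
  refine ⟨circMeasure F, hμprob, ?_⟩
  intro g
  -- the lift of φ(g⁻¹)
  obtain ⟨K, hKmono, hKper, hKlift⟩ := φ.op g⁻¹
  have hKsurj : Function.Surjective K := by
    intro z
    obtain ⟨t0, ht0⟩ := Quotient.exists_rep ((φ.toFun g⁻¹).symm ((z:ℝ):S1))
    have h1 : ((K t0 : ℝ) : S1) = ((z:ℝ):S1) := by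
      rw [hKlift t0, show ((t0:ℝ):S1) = (φ.toFun g⁻¹).symm ((z:ℝ):S1) from ht0]
      exact (φ.toFun g⁻¹).apply_symm_apply _
    obtain ⟨n, hn⟩ := coe_eq_coe.mp h1
    refine ⟨t0 + n, ?_⟩
    rw [addOne_int hKper t0 n]
    linarith
  have hKOcoe : ⇑(StrictMono.orderIsoOfSurjective K hKmono hKsurj) = K :=
    StrictMono.coe_orderIsoOfSurjective K hKmono hKsurj
  have hKcont : Continuous K := by
    rw [← hKOcoe]
    exact OrderIso.continuous _
  have himgK : ∀ p r : ℝ, K '' Ioc p r = Ioc (K p) (K r) := by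
    intro p r
    have h := (StrictMono.orderIsoOfSurjective K hKmono hKsurj).image_Ioc p r
    rwa [hKOcoe] at h
  have hsymm : ∀ y, φ.toFun g⁻¹ y = (φ.toFun g).symm y := by
    intro y; rw [map_inv]; rfl
  have hP : ∀ p r : ℝ, ⇑(φ.toFun g) ⁻¹' arc p r = arc (K p) (K r) := by
    intro p r
    rw [← symm_image (φ.toFun g) (arc p r)]
    have h1 : ⇑(φ.toFun g).symm '' arc p r = ⇑(φ.toFun g⁻¹) '' arc p r := by
      apply image_congr'
      intro y; rw [hsymm]
    rw [h1]
    show ⇑(φ.toFun g⁻¹) '' ((fun t : ℝ => (t:S1)) '' Ioc p r) = (fun t : ℝ => (t:S1)) '' Ioc (K p) (K r)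
    rw [← himgK p r, ← image_comp, ← image_comp]
    apply image_congr'
    intro x
    exact (hKlift x).symm
  -- the measurable preimage/invariance facts
  have hφgm : Measurable ⇑(φ.toFun g) := (φ.toFun g).continuous.measurable
  -- key eventual comparison machinery
  have hball : ∀ δ : ℝ, 0 < δ →
      ({ψ : RGp G | IsType0 ψ} ∩ {χ | circleDist (χ.toFun g) (φ.toFun g) < δ}) ∈ U := by
    intro δ hδ
    refine inter_mem hUC (hUnhds ((isOpen_ball φ g hδ).mem_nhds ?_))
    simp only [mem_setOf_eq, circleDist_self]
    exact hδ
  -- the main estimate: at continuity points the CDF differences agree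
  have hKey : ∀ x, x ∈ Ioo a (a+1) → ContinuousAt c x →
      F (K x) - F (K a) = F x - F a := by
    intro x hx hcx
    have hFx : F x = c x := by
      rw [hFeq]
      exact hcmono.continuousWithinAt_Ioi_iff_rightLim_eq.mp hcx.continuousWithinAt
    have hFa : F a = c a := by
      rw [hFeq]
      exact hcmono.continuousWithinAt_Ioi_iff_rightLim_eq.mp hca.continuousWithinAt
    apply le_antisymm
    · -- upper bound
      apply le_of_forall_pos_le_add
      intro η hη
      obtain ⟨γx, hγx, hγxball⟩ := Metric.continuousAt_iff.mp hcx (η/4) (by linarith)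
      obtain ⟨γa, hγa, hγaball⟩ := Metric.continuousAt_iff.mp hca (η/4) (by linarith)
      set δ := min (min (γx/3) (γa/3)) ((a+1-x)/4) with hδdef
      have hδpos : 0 < δ := lt_min (lt_min (by linarith) (by linarith)) (by
        have := hx.2; linarith)
      have hδ1 : δ ≤ γx/3 := le_trans (min_le_left _ _) (min_le_left _ _)
      have hδ2 : δ ≤ γa/3 := le_trans (min_le_left _ _) (min_le_right _ _)
      have hδ3 : δ ≤ (a+1-x)/4 := min_le_right _ _
      set u := x + δ with hudef
      have hua1 : u ≤ a + 1 := by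
        have := hx.2; simp only [hudef]; linarith
      have hev : ∀ᶠ ψ in (U : Filter (RGp G)),
          WW (μof ψ) (K u) - WW (μof ψ) (K a) ≤ WW (μof ψ) (u+δ) - WW (μof ψ) (a-δ) := by
        filter_upwards [hball δ hδpos] with ψ hψ
        obtain ⟨hψ0, hψd⟩ := hψ
        haveI := hprob ψ
        have hincl : ⇑(φ.toFun g) ⁻¹' arc a u ⊆ ⇑(ψ.toFun g) ⁻¹' arc (a - δ) (u + δ) := by
          intro y hy
          have hd : dist (ψ.toFun g y) (φ.toFun g y) < δ :=
            lt_of_le_of_lt (dist_le_circleDist _ _ y) hψd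
          exact mem_arc_of_dist_lt hd hy
        have hmeas := measure_mono (μ := μof ψ) hincl
        have hinv2 : μof ψ (⇑(ψ.toFun g) ⁻¹' arc (a-δ) (u+δ)) = μof ψ (arc (a-δ) (u+δ)) := by
          conv_rhs => rw [← hinv ψ hψ0 g]
          rw [Measure.map_apply (ψ.toFun g).continuous.measurable (measurableSet_arc _ _)]
        rw [hP a u, hinv2] at hmeas
        have htr := ENNReal.toReal_mono (measure_ne_top _ _) hmeas
        rw [arcMass (μof ψ) (hKmono.monotone (by simp only [hudef]; linarith [hx.1] : a ≤ u))
            (by rw [← hKper a]; exact hKmono.monotone hua1),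
          arcMass (μof ψ) (by simp only [hudef]; linarith [hx.1, hδpos.le] : a - δ ≤ u + δ)
            (by simp only [hudef]; linarith [hx.2, hδ3] : u + δ ≤ (a - δ) + 1)] at htr
        exact htr
      have hlim1 : c (K u) - c (K a) ≤ c (u+δ) - c (a-δ) :=
        le_of_tendsto_of_tendsto ((htend (K u)).sub (htend (K a)))
          ((htend (u+δ)).sub (htend (a-δ))) hev
      have h1 : F (K x) ≤ c (K u) := by
        rw [hFeq]
        exact hcmono.rightLim_le (hKmono (by simp only [hudef]; linarith))
      have h2 : c (K a) ≤ F (K a) := by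
        rw [hFeq]
        exact hcmono.le_rightLim le_rfl
      have h3 : c (u+δ) ≤ c x + η/4 := by
        have := hγxball (show dist (u + δ) x < γx by
          rw [Real.dist_eq]; simp only [hudef]
          rw [abs_of_nonneg (by linarith)]
          linarith)
        rw [Real.dist_eq] at this
        cases abs_lt.mp this
        linarith
      have h4 : c a - η/4 ≤ c (a-δ) := by
        have := hγaball (show dist (a - δ) a < γa by
          rw [Real.dist_eq, abs_of_nonpos (by linarith)]
          linarith)
        rw [Real.dist_eq] at this
        cases abs_lt.mp this
        linarith
      rw [hFx, hFa]
      linarith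
    · -- lower bound
      apply le_of_forall_pos_le_add
      intro η hη
      obtain ⟨γx, hγx, hγxball⟩ := Metric.continuousAt_iff.mp hcx (η/4) (by linarith)
      obtain ⟨γa, hγa, hγaball⟩ := Metric.continuousAt_iff.mp hca (η/4) (by linarith)
      set δ := min (min (γx/3) (γa/3)) ((x-a)/4) with hδdef
      have hδpos : 0 < δ := lt_min (lt_min (by linarith) (by linarith)) (by
        have := hx.1; linarith)
      have hδ1 : δ ≤ γx/3 := le_trans (min_le_left _ _) (min_le_left _ _)
      have hδ2 : δ ≤ γa/3 := le_trans (min_le_left _ _) (min_le_right _ _)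
      have hδ3 : δ ≤ (x-a)/4 := min_le_right _ _
      set u := a + δ with hudef
      have hev : ∀ᶠ ψ in (U : Filter (RGp G)),
          WW (μof ψ) (x-δ) - WW (μof ψ) (u+δ) ≤ WW (μof ψ) (K x) - WW (μof ψ) (K u) := by
        filter_upwards [hball δ hδpos] with ψ hψ
        obtain ⟨hψ0, hψd⟩ := hψ
        haveI := hprob ψ
        have hincl : ⇑(ψ.toFun g) ⁻¹' arc (u+δ) (x-δ) ⊆ ⇑(φ.toFun g) ⁻¹' arc u x := by
          intro y hy
          have hd : dist (φ.toFun g y) (ψ.toFun g y) < δ := by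
            rw [dist_comm]
            exact lt_of_le_of_lt (dist_le_circleDist _ _ y) hψd
          have := mem_arc_of_dist_lt hd hy
          rwa [show u + δ - δ = u by ring, show x - δ + δ = x by ring] at this
        have hmeas := measure_mono (μ := μof ψ) hincl
        have hinv2 : μof ψ (⇑(ψ.toFun g) ⁻¹' arc (u+δ) (x-δ)) = μof ψ (arc (u+δ) (x-δ)) := by
          conv_rhs => rw [← hinv ψ hψ0 g]
          rw [Measure.map_apply (ψ.toFun g).continuous.measurable (measurableSet_arc _ _)]
        rw [hP u x, hinv2] at hmeas
        have htr := ENNReal.toReal_mono (measure_ne_top _ _) hmeas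
        rw [arcMass (μof ψ) (by simp only [hudef]; linarith [hδ3] : u + δ ≤ x - δ)
            (by simp only [hudef]; linarith [hx.2, hδpos.le] : x - δ ≤ (u + δ) + 1),
          arcMass (μof ψ) (hKmono.monotone (by simp only [hudef]; linarith : u ≤ x))
            (by rw [← hKper u]; exact hKmono.monotone (by simp only [hudef]; linarith [hx.2]))] at htr
        exact htr
      have hlim1 : c (x-δ) - c (u+δ) ≤ c (K x) - c (K u) :=
        le_of_tendsto_of_tendsto ((htend (x-δ)).sub (htend (u+δ)))
          ((htend (K x)).sub (htend (K u))) hev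
      have h1 : c (K x) ≤ F (K x) := by
        rw [hFeq]
        exact hcmono.le_rightLim le_rfl
      have h2 : F (K a) ≤ c (K u) := by
        rw [hFeq]
        exact hcmono.rightLim_le (hKmono (by simp only [hudef]; linarith))
      have h3 : c x - η/4 ≤ c (x-δ) := by
        have := hγxball (show dist (x - δ) x < γx by
          rw [Real.dist_eq, abs_of_nonpos (by linarith)]
          linarith)
        rw [Real.dist_eq] at this
        cases abs_lt.mp this
        linarith
      have h4 : c (u+δ) ≤ c a + η/4 := by
        have := hγaball (show dist (u + δ) a < γa by
          rw [Real.dist_eq]; simp only [hudef]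
          rw [abs_of_nonneg (by linarith)]
          linarith)
        rw [Real.dist_eq] at this
        cases abs_lt.mp this
        linarith
      rw [hFx, hFa]
      linarith
  -- extend to all of (a, a+1] using right-continuity
  have hKey2 : ∀ t, t ∈ Ioc a (a+1) → F (K t) - F (K a) = F t - F a := by
    intro t ht
    rcases eq_or_lt_of_le ht.2 with heq | hlt
    · subst heq
      rw [hKper a, hFper (K a), hFper a]
      ring
    · -- approximate from the right by continuity points
      have hseq : ∀ n : ℕ, ∃ d, d ∈ Ioo t (min (a+1) (t + 1/(n+1))) ∧ ContinuousAt c d := by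
        intro n
        obtain ⟨d, hd, hcd⟩ := exists_cont_pt hcmono
          (show t < min (a+1) (t + 1/(n+1)) from lt_min hlt
            (lt_add_of_pos_right t (by positivity)))
        exact ⟨d, hd, hcd⟩
      choose d hd hcd using hseq
      have hdmem : ∀ n, d n ∈ Ioo a (a+1) := fun n =>
        ⟨lt_trans ht.1 (hd n).1, lt_of_lt_of_le (hd n).2 (min_le_left _ _)⟩
      have heqn : ∀ n, F (K (d n)) - F (K a) = F (d n) - F a :=
        fun n => hKey (d n) (hdmem n) (hcd n)
      have hdt : Tendsto d atTop (𝓝 t) := by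
        apply tendsto_of_tendsto_of_tendsto_of_le_of_le (g := fun _ => t)
          (h := fun n : ℕ => t + 1/(n+1)) tendsto_const_nhds ?_
          (fun n => le_of_lt (hd n).1)
          (fun n => le_of_lt (lt_of_lt_of_le (hd n).2 (min_le_right _ _)))
        have h0 : Tendsto (fun n : ℕ => 1/((n:ℝ)+1)) atTop (𝓝 0) :=
          tendsto_one_div_add_atTop_nhds_zero_nat
        have := h0.const_add t
        simpa using this
      have hdIci : Tendsto d atTop (𝓝[Ici t] t) :=
        tendsto_nhdsWithin_of_tendsto_nhds_of_eventually_within _ hdt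
          (Eventually.of_forall fun n => le_of_lt (hd n).1)
      have hlimF : Tendsto (fun n => F (d n) - F a) atTop (𝓝 (F t - F a)) :=
        (((F.right_continuous t).tendsto.comp hdIci)).sub_const _
      have hKdt : Tendsto (fun n => K (d n)) atTop (𝓝[Ici (K t)] (K t)) :=
        tendsto_nhdsWithin_of_tendsto_nhds_of_eventually_within _
          (hKcont.continuousAt.tendsto.comp hdt)
          (Eventually.of_forall fun n => le_of_lt (hKmono (hd n).1))
      have hlimFK : Tendsto (fun n => F (K (d n)) - F (K a)) atTop
          (𝓝 (F (K t) - F (K a))) :=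
        (((F.right_continuous (K t)).tendsto.comp hKdt)).sub_const _
      have hlimFK' : Tendsto (fun n => F (d n) - F a) atTop (𝓝 (F (K t) - F (K a))) := by
        simp only [heqn] at hlimFK
        exact hlimFK
      exact tendsto_nhds_unique hlimFK' hlimF
  -- conclude by comparing CDFs of the two measures
  show Measure.map (⇑(φ.toFun g)) (circMeasure F) = circMeasure F
  haveI hνprob : IsProbabilityMeasure (Measure.map (⇑(φ.toFun g)) (circMeasure F)) :=
    Measure.isProbabilityMeasure_map hφgm.aemeasurable
  have hνapply : ∀ S, MeasurableSet S →
      Measure.map (⇑(φ.toFun g)) (circMeasure F) S = circMeasure F (⇑(φ.toFun g) ⁻¹' S) :=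
    fun S hS => Measure.map_apply hφgm hS
  have hrepm : MeasurableEmbedding (repA a) :=
    (MeasurableEmbedding.subtype_coe measurableSet_Ioc).comp
      (AddCircle.measurableEquivIoc 1 a).measurableEmbedding
  have hcommon : ∀ t : ℝ, Measure.map (⇑(φ.toFun g)) (circMeasure F) (arc a t)
      = circMeasure F (arc a t) := by
    intro t
    rw [hνapply _ (measurableSet_arc a t), hP a t]
    rcases le_or_gt t a with hta | hta
    · rw [arc_empty hta, arc_empty (hKmono.monotone hta)]
    · rcases le_or_gt t (a+1) with hta1 | hta1
      · rw [circMeasure_arc F hFper (hKmono.monotone (le_of_lt hta))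
            (by rw [← hKper a]; exact hKmono.monotone hta1),
          circMeasure_arc F hFper (le_of_lt hta) hta1,
          hKey2 t ⟨hta, hta1⟩]
      · rw [arc_univ (le_of_lt hta1), arc_univ (by rw [← hKper a]; exact hKmono.monotone (le_of_lt hta1))]
  haveI hfin : IsFiniteMeasure
      (Measure.map (repA a) (Measure.map (⇑(φ.toFun g)) (circMeasure F))) := by
    have : IsProbabilityMeasure
        (Measure.map (repA a) (Measure.map (⇑(φ.toFun g)) (circMeasure F))) :=
      Measure.isProbabilityMeasure_map (measurable_repA a).aemeasurable
    infer_instance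
  have hext : Measure.map (repA a) (Measure.map (⇑(φ.toFun g)) (circMeasure F))
      = Measure.map (repA a) (circMeasure F) := by
    apply Measure.ext_of_Iic
    intro t
    rw [Measure.map_apply (measurable_repA a) measurableSet_Iic,
      Measure.map_apply (measurable_repA a) measurableSet_Iic,
      ← arc_eq_preimage]
    exact hcommon t
  apply Measure.ext
  intro s hs
  calc Measure.map (⇑(φ.toFun g)) (circMeasure F) s
      = Measure.map (⇑(φ.toFun g)) (circMeasure F) ((repA a) ⁻¹' ((repA a) '' s)) := by
        rw [preimage_image_eq s hrepm.injective]
    _ = Measure.map (repA a) (Measure.map (⇑(φ.toFun g)) (circMeasure F)) ((repA a) '' s) :=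
        (hrepm.map_apply _ _).symm
    _ = Measure.map (repA a) (circMeasure F) ((repA a) '' s) := by rw [hext]
    _ = circMeasure F ((repA a) ⁻¹' ((repA a) '' s)) := hrepm.map_apply _ _
    _ = circMeasure F s := by rw [preimage_image_eq s hrepm.injective]
end
end

section
/- Let g ≥ 2 and suppose 2g−2 = kl with k, l positive integers. Let φ ∈ R_{Π_g} with eu(φ) = 2g−2. If for each j = 1,…,g one chooses arbitrary k-fold lifts of the homeomorphisms φ(A_j) and φ(B_j) (i.e. homeomorphisms whose π_k-projection is φ(A_j), resp. φ(B_j)), then the product of commutators of these lifts, taken in the order of the surface group relator, equals the identity; hence these choices define a k-fold lift ψ ∈ R_{Π_g} of φ, and every such lift satisfies eu(ψ) = l. -/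
noncomputable section

/-- The `k`-fold self covering map `π_k` of the circle. -/
def expk (k : ℕ) : S1 → S1 := fun x => k • x

/-- `ψ` is a `k`-fold lift of `φ`: `φ(g) ∘ π_k = π_k ∘ ψ(g)`. -/
def IsKFoldLift {G : Type} [Group G] (k : ℕ) (ψ φ : RGp G) : Prop :=
  ∀ g x, φ.toFun g (expk k x) = expk k (ψ.toFun g x)

/-- Minimal action: every orbit is dense. -/
def MinimalAct {G : Type} [Group G] (φ : RGp G) : Prop :=
  ∀ x : S1, Dense (Set.range fun g => φ.toFun g x)

/-- `ψ` is a minimal model of `φ`: a minimal action semiconjugate to `φ`. -/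
def IsMinimalModel {G : Type} [Group G] (φ ψ : RGp G) : Prop :=
  MinimalAct ψ ∧ Semiconj φ ψ

/-- Type `k` (`k ≥ 1`): not type 0, a minimal model is a `k`-fold lift of some
homomorphism, and `k` is maximal with this property. -/
def IsTypeK {G : Type} [Group G] (k : ℕ) (φ : RGp G) : Prop :=
  ¬ IsType0 φ ∧ ∃ ψ : RGp G, IsMinimalModel φ ψ ∧
    (∃ χ : RGp G, IsKFoldLift k ψ χ) ∧
    ∀ m : ℕ, (∃ χ : RGp G, IsKFoldLift m ψ χ) → m ≤ k

/-- The surface group relator `[A₁,B₁]⋯[A_g,B_g]`. -/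
def surfaceRelator (g : ℕ) : FreeGroup (Fin g × Bool) :=
  (List.ofFn fun i : Fin g =>
    FreeGroup.of (i, true) * FreeGroup.of (i, false) *
      (FreeGroup.of (i, true))⁻¹ * (FreeGroup.of (i, false))⁻¹).prod

/-- The surface group `Π_g` of genus `g`. -/
abbrev SurfaceGroup (g : ℕ) :=
  PresentedGroup ({surfaceRelator g} : Set (FreeGroup (Fin g × Bool)))

/-- The generator `A_i` of `Π_g`. -/
def Agen (g : ℕ) (i : Fin g) : SurfaceGroup g :=
  PresentedGroup.of (rels := ({surfaceRelator g} : Set (FreeGroup (Fin g × Bool)))) (i, true)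

/-- The generator `B_i` of `Π_g`. -/
def Bgen (g : ℕ) (i : Fin g) : SurfaceGroup g :=
  PresentedGroup.of (rels := ({surfaceRelator g} : Set (FreeGroup (Fin g × Bool)))) (i, false)

/-- The translation `x ↦ x + n` of the real line. -/
def translationE (n : ℤ) : ℝ ≃ ℝ := Equiv.addRight (n : ℝ)

/-- `F` is a lift of `f` to `ℝ`, as a bijection of the real line. -/
def IsEquivLift (F : ℝ ≃ ℝ) (f : S1 ≃ₜ S1) : Prop :=
  StrictMono F ∧ (∀ x, F (x + 1) = F x + 1) ∧ ∀ x : ℝ, ((F x : S1)) = f (x : S1)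

/-- `φ ∈ R_{Π_g}` has Euler number `n`:
`[φ̃(A₁),φ̃(B₁)]⋯[φ̃(A_g),φ̃(B_g)] = Tⁿ` for (arbitrary) lifts of the generators. -/
def HasEuler {g : ℕ} (φ : RGp (SurfaceGroup g)) (n : ℤ) : Prop :=
  ∃ FA FB : Fin g → ℝ ≃ ℝ,
    (∀ i, IsEquivLift (FA i) (φ.toFun (Agen g i))) ∧
    (∀ i, IsEquivLift (FB i) (φ.toFun (Bgen g i))) ∧
    (List.ofFn fun i => FA i * FB i * (FA i)⁻¹ * (FB i)⁻¹).prod = translationE n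

section Aux

open AddSubgroup

lemma S1.coe_eq_coe {a b : ℝ} : (a : S1) = (b : S1) ↔ ∃ n : ℤ, (n : ℝ) = a - b := by
  rw [QuotientAddGroup.eq_iff_sub_mem]
  simp [AddSubgroup.mem_zmultiples_iff]

lemma S1.coe_int_add (n : ℤ) (x : ℝ) : ((x + n : ℝ) : S1) = (x : S1) :=
  S1.coe_eq_coe.mpr ⟨n, by ring⟩

lemma S1.coe_nsmul (k : ℕ) (x : ℝ) : (((k : ℝ) * x : ℝ) : S1) = k • (x : S1) := by
  have := map_nsmul (QuotientAddGroup.mk' (AddSubgroup.zmultiples (1:ℝ))) k x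
  simpa [nsmul_eq_mul] using this

lemma mulH_apply (f g : S1 ≃ₜ S1) (x : S1) : (f * g) x = f (g x) := rfl

lemma invH_eq (f : S1 ≃ₜ S1) : (f⁻¹ : S1 ≃ₜ S1) = f.symm := rfl

lemma oneH_apply (x : S1) : (1 : S1 ≃ₜ S1) x = x := rfl

lemma lift_int_tr {F : ℝ → ℝ} (hF : ∀ x, F (x + 1) = F x + 1) :
    ∀ (n : ℤ) (x : ℝ), F (x + n) = F x + n := by
  have key : ∀ (m : ℕ) (x : ℝ), F (x + m) = F x + m := by
    intro m
    induction m with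
    | zero => simp
    | succ i ih =>
      intro x
      have h1 : (x + (i + 1 : ℕ) : ℝ) = (x + i) + 1 := by push_cast; ring
      rw [h1, hF, ih]; push_cast; ring
  intro n x
  rcases le_or_gt 0 n with h | h
  · obtain ⟨m, rfl⟩ := Int.eq_ofNat_of_zero_le h
    exact_mod_cast key m x
  · obtain ⟨m, rfl⟩ : ∃ m : ℕ, n = -(m : ℤ) := ⟨n.natAbs, by omega⟩
    have := key m (x + (-(m:ℤ) : ℤ))
    push_cast at this ⊢
    have h2 : x + -(m:ℝ) + m = x := by ring
    rw [h2] at this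
    linarith

lemma int_tr_sub {F : ℝ → ℝ} (hF : ∀ x, F (x + 1) = F x + 1) (n : ℤ) (x : ℝ) :
    F (x - n) = F x - n := by
  have := lift_int_tr hF (-n) x
  push_cast at this
  rw [← sub_eq_add_neg] at this
  linarith

end Aux

section Aux2

lemma perm_inv_apply_eq {F : ℝ ≃ ℝ} {x y : ℝ} (h : F y = x) : F⁻¹ x = y := by
  have : F⁻¹ (F y) = y := F.symm_apply_apply y
  rw [h] at this; exact this

lemma inv_int_tr {F : ℝ ≃ ℝ} (hF : ∀ x, F (x + 1) = F x + 1) :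
    ∀ x, (F⁻¹ : ℝ ≃ ℝ) (x + 1) = F⁻¹ x + 1 := by
  intro x
  apply perm_inv_apply_eq
  rw [hF, show F (F⁻¹ x) = x from F.apply_symm_apply x]

lemma comm_aux {G : Type*} [Group G] {t u F B : G}
    (htF : Commute t F) (htB : Commute t B) (huF : Commute u F) (huB : Commute u B)
    (htu : Commute t u) :
    t * F * (u * B) * (t * F)⁻¹ * (u * B)⁻¹ = F * B * F⁻¹ * B⁻¹ := by
  have hX : Commute (t * u) ((F * B) * (B * F)⁻¹) :=
    ((htF.mul_right htB).mul_left (huF.mul_right huB)).mul_right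
      (((htB.mul_right htF).mul_left (huB.mul_right huF)).inv_right)
  calc t * F * (u * B) * (t * F)⁻¹ * (u * B)⁻¹
      = (t * F * (u * B)) * ((t * F)⁻¹ * (u * B)⁻¹) := by rw [mul_assoc]
    _ = ((t * u) * (F * B)) * ((u * B) * (t * F))⁻¹ := by
        rw [huF.symm.mul_mul_mul_comm, ← mul_inv_rev]
    _ = ((t * u) * (F * B)) * ((u * t) * (B * F))⁻¹ := by
        rw [htB.symm.mul_mul_mul_comm]
    _ = (t * u) * ((F * B) * (B * F)⁻¹) * (t * u)⁻¹ := by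
        rw [← htu.eq, mul_inv_rev, ← mul_assoc, mul_assoc (t*u)]
    _ = (F * B) * (B * F)⁻¹ := by rw [hX.eq, mul_inv_cancel_right]
    _ = F * B * F⁻¹ * B⁻¹ := by rw [mul_inv_rev, ← mul_assoc]

lemma commute_translationE {F : ℝ ≃ ℝ} (hF : ∀ x, F (x + 1) = F x + 1) (n : ℤ) :
    Commute (translationE n) F := by
  apply Equiv.ext
  intro x
  simp only [Equiv.Perm.mul_apply, translationE, Equiv.coe_addRight]
  exact (lift_int_tr hF n x).symm

def LiftsTo (F : ℝ ≃ ℝ) (f : S1 ≃ₜ S1) : Prop := ∀ x : ℝ, ((F x : ℝ) : S1) = f (x : S1)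

lemma liftsTo_mul {F G : ℝ ≃ ℝ} {f h : S1 ≃ₜ S1} (hF : LiftsTo F f) (hG : LiftsTo G h) :
    LiftsTo (F * G) (f * h) := by
  intro x
  rw [Equiv.Perm.mul_apply, hF, hG, mulH_apply]

lemma liftsTo_inv {F : ℝ ≃ ℝ} {f : S1 ≃ₜ S1} (hF : LiftsTo F f) : LiftsTo F⁻¹ f⁻¹ := by
  intro x
  have h := (hF (F⁻¹ x)).symm
  rw [show F (F⁻¹ x) = x from F.apply_symm_apply x] at h
  calc ((F⁻¹ x : ℝ) : S1) = f.symm (f ((F⁻¹ x : ℝ) : S1)) := (f.symm_apply_apply _).symm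
    _ = f.symm (x : S1) := by rw [← h]
    _ = f⁻¹ (x : S1) := rfl

lemma liftsTo_prod {n : ℕ} (F : Fin n → ℝ ≃ ℝ) (f : Fin n → S1 ≃ₜ S1)
    (h : ∀ i, LiftsTo (F i) (f i)) : LiftsTo (List.ofFn F).prod (List.ofFn f).prod := by
  induction n with
  | zero => intro x; simp [List.ofFn_zero]
  | succ m ih =>
    rw [List.ofFn_succ, List.ofFn_succ, List.prod_cons, List.prod_cons]
    exact liftsTo_mul (h 0) (ih _ _ (fun i => h i.succ))

end Aux2

section Aux3

lemma torsion_finite (k : ℕ) (hk : 0 < k) : {y : S1 | k • y = 0}.Finite := by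
  apply Set.Finite.subset (Set.finite_range fun n : Fin k => ((((n : ℕ) : ℝ) / k : ℝ) : S1))
  rintro y hy
  obtain ⟨x, rfl⟩ := QuotientAddGroup.mk_surjective y
  have h1 : (((k : ℝ) * x : ℝ) : S1) = 0 := by
    rw [S1.coe_nsmul]; exact hy
  rw [AddCircle.coe_eq_zero_iff] at h1
  obtain ⟨n, hn⟩ := h1
  rw [zsmul_one] at hn
  have hk' : (k : ℝ) ≠ 0 := by positivity
  have hx : x = (n : ℝ) / k := by field_simp; linarith [hn]
  have hm0 : 0 ≤ n % k := Int.emod_nonneg n (by exact_mod_cast hk.ne')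
  have hmk : n % k < k := Int.emod_lt_of_pos n (by exact_mod_cast hk)
  refine ⟨⟨(n % k).toNat, by omega⟩, ?_⟩
  have hcast : (((n % k).toNat : ℕ) : ℝ) = ((n % k : ℤ) : ℝ) := by
    exact_mod_cast congrArg Int.cast (Int.toNat_of_nonneg hm0)
  show ((((n % k).toNat : ℝ) / k : ℝ) : S1) = (x : S1)
  rw [hcast, hx, S1.coe_eq_coe]
  refine ⟨-(n / k), ?_⟩
  have h2 : (n : ℝ) = ((k : ℤ) * (n / k) + n % k : ℤ) := by
    norm_cast
    rw [Int.mul_ediv_add_emod]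
  push_cast at h2 ⊢
  field_simp
  linarith [h2]

lemma torsion_const {k : ℕ} (hk : 0 < k) {d : ℝ → S1} (hd : Continuous d)
    (htor : ∀ x, k • d x = 0) : ∀ x, d x = d 0 := by
  have hfin : {y : S1 | k • y = 0}.Finite := torsion_finite k hk
  haveI : Finite {y : S1 // k • y = 0} := hfin.to_subtype
  let d' : ℝ → {y : S1 // k • y = 0} := fun x => ⟨d x, htor x⟩
  have hc : Continuous d' := hd.subtype_mk _
  have hl : IsLocallyConstant d' := (IsLocallyConstant.iff_continuous d').mpr hc
  intro x
  exact congrArg Subtype.val (hl.apply_eq_of_preconnectedSpace x 0)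

end Aux3

section Aux4

lemma isOP_one : IsOP 1 :=
  ⟨id, strictMono_id, fun x => rfl, fun _ => rfl⟩

lemma isOP_mul {f h : S1 ≃ₜ S1} (hf : IsOP f) (hh : IsOP h) : IsOP (f * h) := by
  obtain ⟨F, hFm, hF1, hFp⟩ := hf
  obtain ⟨H, hHm, hH1, hHp⟩ := hh
  refine ⟨F ∘ H, hFm.comp hHm, fun x => by simp [Function.comp, hH1, hF1], fun x => ?_⟩
  simp only [Function.comp_apply, mulH_apply]
  rw [hFp, hHp]

lemma surj_of_lift {F : ℝ → ℝ} {f : S1 ≃ₜ S1} (hF1 : ∀ x, F (x + 1) = F x + 1)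
    (hFp : ∀ x : ℝ, ((F x : S1)) = f (x : S1)) : Function.Surjective F := by
  intro y
  obtain ⟨x, hx⟩ := QuotientAddGroup.mk_surjective (f.symm (y : S1))
  have h1 : (F x : S1) = (y : S1) := by
    rw [hFp, show ((x : ℝ) : S1) = f.symm (y : S1) from hx, Homeomorph.apply_symm_apply]
  rw [S1.coe_eq_coe] at h1
  obtain ⟨n, hn⟩ := h1
  refine ⟨x + (-n : ℤ), ?_⟩
  rw [lift_int_tr hF1]
  push_cast
  linarith

lemma isOP_inv {f : S1 ≃ₜ S1} (hf : IsOP f) : IsOP f⁻¹ := by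
  obtain ⟨F, hFm, hF1, hFp⟩ := hf
  have hsurj := surj_of_lift hF1 hFp
  let oi := StrictMono.orderIsoOfSurjective F hFm hsurj
  have hoi : ∀ x, oi x = F x := fun x => rfl
  refine ⟨oi.symm, oi.symm.strictMono, fun x => ?_, fun x => ?_⟩
  · apply hFm.injective
    have e1 : F (oi.symm (x + 1)) = x + 1 := oi.apply_symm_apply (x+1)
    have e2 : F (oi.symm x) = x := oi.apply_symm_apply x
    rw [e1, hF1, e2]
  · have e2 : F (oi.symm x) = x := oi.apply_symm_apply x
    have h := hFp (oi.symm x)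
    rw [e2] at h
    calc ((oi.symm x : ℝ) : S1) = f.symm (f ((oi.symm x : ℝ) : S1)) := (f.symm_apply_apply _).symm
      _ = f.symm (x : S1) := by rw [← h]
      _ = f⁻¹ (x : S1) := rfl

end Aux4

section Aux5

lemma exists_good_lift {k : ℕ} (hk : 0 < k) (f a : S1 ≃ₜ S1) (FA : ℝ ≃ ℝ)
    (hFA : IsEquivLift FA f) (haf : ∀ x : S1, f (k • x) = k • (a x)) :
    ∃ (GA : ℝ ≃ ℝ) (m : ℤ), IsEquivLift GA a ∧ ∀ x, (k : ℝ) * GA x = FA ((k : ℝ) * x) + m := by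
  obtain ⟨hFm, hF1, hFp⟩ := hFA
  have hk' : (k : ℝ) ≠ 0 := by positivity
  have hk'' : (0:ℝ) < k := by positivity
  -- continuity of FA
  have hFc : Continuous FA := by
    have := (StrictMono.orderIsoOfSurjective FA hFm FA.surjective).continuous
    exact this
  -- the defect function
  set d : ℝ → S1 := fun x => ((((k:ℝ)⁻¹ * FA ((k:ℝ) * x) : ℝ) : S1)) - a ((x : ℝ) : S1) with hd
  have hproj : ∀ x : ℝ, k • ((((k:ℝ)⁻¹ * FA ((k:ℝ) * x) : ℝ) : S1)) = k • a ((x : ℝ) : S1) := by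
    intro x
    rw [← S1.coe_nsmul]
    have e1 : (k : ℝ) * ((k:ℝ)⁻¹ * FA ((k:ℝ) * x)) = FA ((k:ℝ) * x) := by field_simp
    rw [e1, hFp, S1.coe_nsmul, haf]
  have htor : ∀ x, k • d x = 0 := by
    intro x
    rw [hd]
    simp only [smul_sub]
    rw [hproj x, sub_self]
  have hdc : Continuous d := by
    apply Continuous.fun_sub
    · exact continuous_quotient_mk'.comp ((continuous_const.mul (hFc.comp (continuous_const.mul continuous_id))))
    · exact (a.continuous).comp continuous_quotient_mk'
  have hconst := torsion_const hk hdc htor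
  -- choose c with (c : S1) = - d 0 and k*c integer
  obtain ⟨c₀, hc₀⟩ := QuotientAddGroup.mk_surjective (d 0)
  set c : ℝ := -c₀ with hcdef
  have hcS : ((c : ℝ) : S1) = - d 0 := by
    rw [hcdef, ← hc₀]
    exact (QuotientAddGroup.mk' (AddSubgroup.zmultiples (1:ℝ))).map_neg c₀
  have hckint : ∃ n : ℤ, (n : ℝ) = (k : ℝ) * c := by
    have h1 : (((k:ℝ) * c : ℝ) : S1) = 0 := by
      rw [S1.coe_nsmul, hcS, smul_neg, htor 0, neg_zero]
    rw [AddCircle.coe_eq_zero_iff] at h1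
    obtain ⟨n, hn⟩ := h1
    exact ⟨n, by rw [← zsmul_one n]; exact hn⟩
  obtain ⟨m, hm⟩ := hckint
  -- the lift GA
  set GA : ℝ ≃ ℝ := (Equiv.mulLeft₀ (k:ℝ) hk').trans (FA.trans
    ((Equiv.mulLeft₀ ((k:ℝ)⁻¹) (by positivity)).trans (Equiv.addRight c))) with hGA
  have hGAx : ∀ x, GA x = (k:ℝ)⁻¹ * FA ((k:ℝ) * x) + c := by
    intro x
    simp [hGA, Equiv.trans_apply, Equiv.mulLeft₀_apply, Equiv.coe_addRight]
  refine ⟨GA, m, ⟨?_, ?_, ?_⟩, ?_⟩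
  · intro x y hxy
    rw [hGAx, hGAx]
    have h1 : (k:ℝ) * x < (k:ℝ) * y := by nlinarith
    have h2 := hFm h1
    have h3 : (0:ℝ) < (k:ℝ)⁻¹ := by positivity
    nlinarith
  · intro x
    rw [hGAx, hGAx]
    have e1 : (k:ℝ) * (x + 1) = (k:ℝ) * x + (k : ℤ) := by push_cast; ring
    rw [e1, lift_int_tr hF1]
    push_cast
    field_simp
    ring
  · intro x
    rw [hGAx, AddCircle.coe_add, hcS, ← hconst x]
    have hdx : d x = ((((k:ℝ)⁻¹ * FA ((k:ℝ) * x) : ℝ) : S1)) - a ((x : ℝ) : S1) := rfl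
    rw [hdx]
    abel
  · intro x
    rw [hGAx]
    have e1 : (k:ℝ) * ((k:ℝ)⁻¹ * FA ((k:ℝ) * x) + c) = FA ((k:ℝ) * x) + (k:ℝ) * c := by
      field_simp
    rw [e1, hm]

end Aux5

section Aux6

lemma surfaceGroup_induction {g : ℕ} (Q : SurfaceGroup g → Prop)
    (h1 : Q 1) (hmul : ∀ a b, Q a → Q b → Q (a * b)) (hinv : ∀ a, Q a → Q a⁻¹)
    (hA : ∀ i, Q (Agen g i)) (hB : ∀ i, Q (Bgen g i)) : ∀ γ, Q γ := by
  intro γ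
  refine QuotientGroup.induction_on γ ?_
  intro z
  induction z using FreeGroup.induction_on with
  | C1 => exact h1
  | of x =>
    obtain ⟨i, b⟩ := x
    cases b
    · exact hB i
    · exact hA i
  | inv_of x ih => exact hinv _ ih
  | mul x y ihx ihy => exact hmul _ _ ihx ihy

end Aux6

/-- For `eu(φ) = 2g-2 = kl`, arbitrary `k`-fold lifts of the images
of the generators satisfy the surface group relation, hence define a `k`-fold lift
`ψ` of `φ`, and every such lift has Euler number `l`. -/
theorem lifts_give_kfold_lift (g k l : ℕ) (hg : 2 ≤ g) (hk : 0 < k) (hl : 0 < l)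
    (hkl : 2 * (g : ℤ) - 2 = (k : ℤ) * l)
    (φ : RGp (SurfaceGroup g)) (heu : HasEuler φ (2 * (g : ℤ) - 2))
    (α β : Fin g → S1 ≃ₜ S1)
    (hα : ∀ i x, φ.toFun (Agen g i) (expk k x) = expk k (α i x))
    (hβ : ∀ i x, φ.toFun (Bgen g i) (expk k x) = expk k (β i x)) :
    (List.ofFn fun i => α i * β i * (α i)⁻¹ * (β i)⁻¹).prod = 1 ∧
    ∃ ψ : RGp (SurfaceGroup g),
      (∀ i, ψ.toFun (Agen g i) = α i ∧ ψ.toFun (Bgen g i) = β i) ∧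
      IsKFoldLift k ψ φ ∧ HasEuler ψ (l : ℤ) := by
  classical
  obtain ⟨FA, FB, hFA, hFB, hprodF⟩ := heu
  have hk' : (k : ℝ) ≠ 0 := by positivity
  choose GA mA hGA hmA using fun i =>
    exists_good_lift hk (φ.toFun (Agen g i)) (α i) (FA i) (hFA i) (fun x => hα i x)
  choose GB mB hGB hmB using fun i =>
    exists_good_lift hk (φ.toFun (Bgen g i)) (β i) (FB i) (hFB i) (fun x => hβ i x)
  set s : ℝ ≃ ℝ := Equiv.mulLeft₀ (k : ℝ) hk' with hs
  have hsx : ∀ x, s x = (k : ℝ) * x := fun x => rfl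
  have hsinvx : ∀ x, (s⁻¹ : ℝ ≃ ℝ) x = (k : ℝ)⁻¹ * x := by
    intro x
    show s.symm x = _
    rw [hs]
    simp
  -- conjugated lifts are integer translates of the original ones
  have hconjA : ∀ i, (MulAut.conj s) (GA i) = translationE (mA i) * FA i := by
    intro i
    apply Equiv.ext
    intro x
    rw [MulAut.conj_apply, Equiv.Perm.mul_apply, Equiv.Perm.mul_apply, hsinvx, hsx, hmA i,
      Equiv.Perm.mul_apply]
    rw [mul_inv_cancel_left₀ hk' x]
    show _ = FA i x + ((mA i : ℤ) : ℝ)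
    rfl
  have hconjB : ∀ i, (MulAut.conj s) (GB i) = translationE (mB i) * FB i := by
    intro i
    apply Equiv.ext
    intro x
    rw [MulAut.conj_apply, Equiv.Perm.mul_apply, Equiv.Perm.mul_apply, hsinvx, hsx, hmB i,
      Equiv.Perm.mul_apply]
    rw [mul_inv_cancel_left₀ hk' x]
    show _ = FB i x + ((mB i : ℤ) : ℝ)
    rfl
  have hentry : ∀ i : Fin g, (MulAut.conj s) (GA i * GB i * (GA i)⁻¹ * (GB i)⁻¹)
      = FA i * FB i * (FA i)⁻¹ * (FB i)⁻¹ := by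
    intro i
    rw [map_mul, map_mul, map_mul, map_inv, map_inv, hconjA, hconjB]
    exact comm_aux (commute_translationE (hFA i).2.1 (mA i))
      (commute_translationE (hFB i).2.1 (mA i))
      (commute_translationE (hFA i).2.1 (mB i))
      (commute_translationE (hFB i).2.1 (mB i))
      (by
        apply Equiv.ext
        intro x
        simp only [Equiv.Perm.mul_apply, translationE, Equiv.coe_addRight]
        ring)
  have hCP : (MulAut.conj s) (List.ofFn fun i => GA i * GB i * (GA i)⁻¹ * (GB i)⁻¹).prod
      = translationE (2 * (g : ℤ) - 2) := by
    rw [map_list_prod, List.map_ofFn]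
    have he : (⇑(MulAut.conj s) ∘ fun i => GA i * GB i * (GA i)⁻¹ * (GB i)⁻¹)
        = fun i => FA i * FB i * (FA i)⁻¹ * (FB i)⁻¹ := funext fun i => hentry i
    rw [he, hprodF]
  have hP : (List.ofFn fun i => GA i * GB i * (GA i)⁻¹ * (GB i)⁻¹).prod = translationE (l : ℤ) := by
    apply (MulAut.conj s).injective
    rw [hCP]
    apply Equiv.ext
    intro x
    rw [MulAut.conj_apply, Equiv.Perm.mul_apply, Equiv.Perm.mul_apply, hsinvx, hsx]
    show x + ((2 * (g : ℤ) - 2 : ℤ) : ℝ) = (k : ℝ) * ((k : ℝ)⁻¹ * x + ((l : ℤ) : ℝ))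
    rw [hkl]
    push_cast
    field_simp
  have hliftP : LiftsTo (List.ofFn fun i => GA i * GB i * (GA i)⁻¹ * (GB i)⁻¹).prod
      ((List.ofFn fun i => α i * β i * (α i)⁻¹ * (β i)⁻¹).prod) :=
    liftsTo_prod _ _ (fun i =>
      liftsTo_mul (liftsTo_mul (liftsTo_mul (hGA i).2.2 (hGB i).2.2)
        (liftsTo_inv (hGA i).2.2)) (liftsTo_inv (hGB i).2.2))
  have hprod1 : (List.ofFn fun i => α i * β i * (α i)⁻¹ * (β i)⁻¹).prod = 1 := by
    apply Homeomorph.ext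
    intro y
    obtain ⟨x, rfl⟩ := QuotientAddGroup.mk_surjective y
    have h := (hliftP x).symm
    rw [hP] at h
    rw [h]
    show ((x + ((l : ℤ) : ℝ) : ℝ) : S1) = ((x : ℝ) : S1)
    exact S1.coe_int_add l x
  -- build ψ
  have hrel : ∀ r ∈ ({surfaceRelator g} : Set (FreeGroup (Fin g × Bool))),
      FreeGroup.lift (fun p : Fin g × Bool => if p.2 then α p.1 else β p.1) r = 1 := by
    intro r hr
    rw [Set.mem_singleton_iff] at hr
    subst hr
    rw [surfaceRelator, map_list_prod, List.map_ofFn]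
    have he : (⇑(FreeGroup.lift (fun p : Fin g × Bool => if p.2 then α p.1 else β p.1)) ∘
        fun i : Fin g => FreeGroup.of (i, true) * FreeGroup.of (i, false) *
          (FreeGroup.of (i, true))⁻¹ * (FreeGroup.of (i, false))⁻¹)
        = fun i => α i * β i * (α i)⁻¹ * (β i)⁻¹ := by
      funext i
      simp
    rw [he, hprod1]
  have hψA : ∀ i, PresentedGroup.toGroup hrel (Agen g i) = α i := by
    intro i
    show PresentedGroup.toGroup hrel (PresentedGroup.of (i, true)) = α i
    rw [PresentedGroup.toGroup.of]
    simp
  have hψB : ∀ i, PresentedGroup.toGroup hrel (Bgen g i) = β i := by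
    intro i
    show PresentedGroup.toGroup hrel (PresentedGroup.of (i, false)) = β i
    rw [PresentedGroup.toGroup.of]
    simp
  have hop : ∀ γ, IsOP (PresentedGroup.toGroup hrel γ) := by
    refine surfaceGroup_induction _ ?_ ?_ ?_ ?_ ?_
    · rw [map_one]; exact isOP_one
    · intro a b ha hb; rw [map_mul]; exact isOP_mul ha hb
    · intro a ha; rw [map_inv]; exact isOP_inv ha
    · intro i; rw [hψA i]; exact ⟨GA i, (hGA i).1, (hGA i).2.1, (hGA i).2.2⟩
    · intro i; rw [hψB i]; exact ⟨GB i, (hGB i).1, (hGB i).2.1, (hGB i).2.2⟩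
  refine ⟨hprod1, ⟨⟨PresentedGroup.toGroup hrel, hop⟩, fun i => ⟨hψA i, hψB i⟩, ?_, ?_⟩⟩
  · -- IsKFoldLift
    refine surfaceGroup_induction
      (fun γ => ∀ x, φ.toFun γ (expk k x) = expk k (PresentedGroup.toGroup hrel γ x)) ?_ ?_ ?_ ?_ ?_
    · intro x; rw [map_one, map_one]; rfl
    · intro a b ha hb x
      rw [map_mul, map_mul, mulH_apply, mulH_apply, hb, ha]
    · intro a ha x
      rw [map_inv, map_inv, invH_eq, invH_eq]
      have h := ha ((PresentedGroup.toGroup hrel a).symm x)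
      rw [Homeomorph.apply_symm_apply] at h
      rw [← h, Homeomorph.symm_apply_apply]
    · intro i x; rw [hψA i]; exact hα i x
    · intro i x; rw [hψB i]; exact hβ i x
  · -- HasEuler ψ l
    refine ⟨GA, GB, fun i => ?_, fun i => ?_, hP⟩
    · show IsEquivLift (GA i) (PresentedGroup.toGroup hrel (Agen g i))
      rw [hψA i]; exact hGA i
    · show IsEquivLift (GB i) (PresentedGroup.toGroup hrel (Bgen g i))
      rw [hψB i]; exact hGB i
end
end
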